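/- Let d ≥ 2 and h > 0. No h-free time minimizer of the Newtonian N-body problem is superhyperbolic: every h-free time minimizer γ : [0,∞) → E^N satisfies limsup_{t→∞} R(t)/t < ∞, where R(t) = max_{i<j} ‖γ_i(t) − γ_j(t)‖. -/

import Mathlib

open MeasureTheory Filter Topology Asymptotics
open scoped BigOperators

noncomputable section

/-- Configuration space of `N` point masses in the Euclidean space `E = ℝ^d`. -/
abbrev Config (d N : ℕ) := Fin N → EuclideanSpace ℝ (Fin d)

/-- Kinetic energy `T(v) = (1/2) Σ_i m_i ‖v_i‖²`. -/
def kineticEnergy (d N : ℕ) (m : Fin N → ℝ) (v : Config d N) : ℝ :=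
  (1 / 2) * ∑ i, m i * ‖v i‖ ^ 2

/-- Newtonian potential `U(x) = Σ_{i<j} G m_i m_j / ‖x_i − x_j‖`. -/
def potentialEnergy (d N : ℕ) (G : ℝ) (m : Fin N → ℝ) (x : Config d N) : ℝ :=
  ∑ i : Fin N, ∑ j : Fin N, if i < j then G * m i * m j / ‖x i - x j‖ else 0

/-- Lagrangian `L(x,v) = T(v) + U(x)`. -/
def lagrangian (d N : ℕ) (G : ℝ) (m : Fin N → ℝ) (x v : Config d N) : ℝ :=
  kineticEnergy d N m v + potentialEnergy d N G m x

/-- `γ` is absolutely continuous on `[a,b]` with a.e. derivative `g`: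
`γ t = γ a + ∫_a^t g`. -/
structure ACOn (d N : ℕ) (γ g : ℝ → Config d N) (a b : ℝ) : Prop where
  integrable : IntervalIntegrable g volume a b
  eq : ∀ t ∈ Set.Icc a b, γ t = γ a + ∫ s in a..t, g s

/-- Fixed-time action potential `φ_h(x, x', τ)`: infimum of `A_{L+h}` over absolutely
continuous curves from `x` to `x'` in time `τ` (with integrable Lagrangian). -/
def phiTimed (d N : ℕ) (G : ℝ) (m : Fin N → ℝ) (h : ℝ) (x x' : Config d N) (τ : ℝ) : ℝ :=
  sInf { c : ℝ | ∃ γ g : ℝ → Config d N, ACOn d N γ g 0 τ ∧ γ 0 = x ∧ γ τ = x' ∧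
    IntervalIntegrable (fun t => lagrangian d N G m (γ t) (g t) + h) volume 0 τ ∧
    c = ∫ t in (0:ℝ)..τ, (lagrangian d N G m (γ t) (g t) + h) }

/-- Free-time action potential `φ_h(x, x') = inf_{τ>0} φ_h(x, x', τ)`. -/
def phiFree (d N : ℕ) (G : ℝ) (m : Fin N → ℝ) (h : ℝ) (x x' : Config d N) : ℝ :=
  sInf { c : ℝ | ∃ τ : ℝ, 0 < τ ∧ c = phiTimed d N G m h x x' τ }

/-- `γ` (with a.e. derivative `g`) is an `h`-free time minimizer:
`A_{L+h}(γ|_{[t,t+τ]}) = φ_h(γ(t), γ(t+τ))` for all `t ≥ 0`, `τ > 0`. -/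
def IsFTM (d N : ℕ) (G : ℝ) (m : Fin N → ℝ) (h : ℝ) (γ g : ℝ → Config d N) : Prop :=
  ∀ t : ℝ, 0 ≤ t → ∀ τ : ℝ, 0 < τ →
    ACOn d N γ g t (t + τ) ∧
    IntervalIntegrable (fun s => lagrangian d N G m (γ s) (g s) + h) volume t (t + τ) ∧
    (∫ s in t..t + τ, (lagrangian d N G m (γ s) (g s) + h)) =
      phiFree d N G m h (γ t) (γ (t + τ))

/-- `f(t) ≈ g(t)`: there are `0 < c ≤ C` and `t₀` with `c g(t) ≤ f(t) ≤ C g(t)` for `t ≥ t₀`. -/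
def SameGrowth (f g : ℝ → ℝ) : Prop :=
  ∃ c C t₀ : ℝ, 0 < c ∧ c ≤ C ∧ ∀ t ≥ t₀, c * g t ≤ f t ∧ f t ≤ C * g t

/-- Total mass of the cluster `A`. -/
def clusterMass (N : ℕ) (m : Fin N → ℝ) (A : Finset (Fin N)) : ℝ := ∑ i ∈ A, m i

/-- Center of mass of the cluster `A` in the configuration `x`. -/
def clusterCenter (d N : ℕ) (m : Fin N → ℝ) (A : Finset (Fin N)) (x : Config d N) :
    EuclideanSpace ℝ (Fin d) :=
  (clusterMass N m A)⁻¹ • ∑ i ∈ A, m i • x i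

/-- Internal potential `U_A` of the cluster `A`. -/
def clusterPotential (d N : ℕ) (G : ℝ) (m : Fin N → ℝ) (A : Finset (Fin N))
    (x : Config d N) : ℝ :=
  ∑ i ∈ A, ∑ j ∈ A, if i < j then G * m i * m j / ‖x i - x j‖ else 0

/-- Sum of the internal cluster potentials of the partition `P`. -/
def internalPotential (d N : ℕ) (G : ℝ) (m : Fin N → ℝ)
    (P : Finpartition (Finset.univ : Finset (Fin N))) (x : Config d N) : ℝ :=
  ∑ A ∈ P.parts, clusterPotential d N G m A x

/-- Interaction potential between distinct clusters of the partition `P`. -/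
def interactionDensity (d N : ℕ) (G : ℝ) (m : Fin N → ℝ)
    (P : Finpartition (Finset.univ : Finset (Fin N))) (x : Config d N) : ℝ :=
  ∑ i : Fin N, ∑ j : Fin N,
    if i < j ∧ ∀ A ∈ P.parts, ¬(i ∈ A ∧ j ∈ A) then G * m i * m j / ‖x i - x j‖ else 0

/-- Lagrangian with no interaction term. -/
def lagrangianI0 (d N : ℕ) (G : ℝ) (m : Fin N → ℝ)
    (P : Finpartition (Finset.univ : Finset (Fin N))) (x v : Config d N) : ℝ :=
  kineticEnergy d N m v + internalPotential d N G m P x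

/-- Fixed-time action potential with no interaction term `φ_{h,I=0}(x, x', τ)`. -/
def phiI0Timed (d N : ℕ) (G : ℝ) (m : Fin N → ℝ)
    (P : Finpartition (Finset.univ : Finset (Fin N))) (h : ℝ) (x x' : Config d N)
    (τ : ℝ) : ℝ :=
  sInf { c : ℝ | ∃ γ g : ℝ → Config d N, ACOn d N γ g 0 τ ∧ γ 0 = x ∧ γ τ = x' ∧
    IntervalIntegrable (fun t => lagrangianI0 d N G m P (γ t) (g t) + h) volume 0 τ ∧
    c = ∫ t in (0:ℝ)..τ, (lagrangianI0 d N G m P (γ t) (g t) + h) }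

/-- Free-time action potential with no interaction term `φ_{h,I=0}(x, x')`. -/
def phiI0Free (d N : ℕ) (G : ℝ) (m : Fin N → ℝ)
    (P : Finpartition (Finset.univ : Finset (Fin N))) (h : ℝ) (x x' : Config d N) : ℝ :=
  sInf { c : ℝ | ∃ τ : ℝ, 0 < τ ∧ c = phiI0Timed d N G m P h x x' τ }

/-- Squared mass norm of the difference of the cluster centers of mass:
`‖y − y'‖² = Σ_{A∈P} M_A ‖y_A − y'_A‖²`. -/
def massNormSqCenters (d N : ℕ) (m : Fin N → ℝ)
    (P : Finpartition (Finset.univ : Finset (Fin N))) (x x' : Config d N) : ℝ :=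
  ∑ A ∈ P.parts, clusterMass N m A * ‖clusterCenter d N m A x - clusterCenter d N m A x'‖ ^ 2

/-- Mass-norm distance `‖z_A − z'_A‖` between the relative configurations of the cluster `A`. -/
def relConfigDist (d N : ℕ) (m : Fin N → ℝ) (A : Finset (Fin N)) (x x' : Config d N) : ℝ :=
  Real.sqrt (∑ i ∈ A,
    m i * ‖(x i - clusterCenter d N m A x) - (x' i - clusterCenter d N m A x')‖ ^ 2)

/-- Newtonian acceleration of the body `i` in the configuration `x`:
`x_i'' = Σ_{j≠i} G m_j (x_j − x_i)/‖x_j − x_i‖³`. -/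
def accel (d N : ℕ) (G : ℝ) (m : Fin N → ℝ) (x : Config d N) (i : Fin N) :
    EuclideanSpace ℝ (Fin d) :=
  ∑ j ∈ Finset.univ.erase i, (G * m j / ‖x j - x i‖ ^ 3) • (x j - x i)

/-- `γ`, with velocity curve `v`, is a collision-free solution of Newton's equations on `s`. -/
def IsMotionWithOn (d N : ℕ) (G : ℝ) (m : Fin N → ℝ) (γ v : ℝ → Config d N)
    (s : Set ℝ) : Prop :=
  ∀ t ∈ s, (∀ i j : Fin N, i ≠ j → γ t i ≠ γ t j) ∧
    ∀ i : Fin N, HasDerivAt (fun u => γ u i) (v t i) t ∧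
      HasDerivAt (fun u => v u i) (accel d N G m (γ t) i) t

/-- `γ` is a motion (collision-free solution of Newton's equations) on `s`. -/
def IsMotionOn (d N : ℕ) (G : ℝ) (m : Fin N → ℝ) (γ : ℝ → Config d N) (s : Set ℝ) : Prop :=
  ∃ v : ℝ → Config d N, IsMotionWithOn d N G m γ v s

/-- The motion is superhyperbolic: `limsup_{t→∞} R(t)/t = +∞`. -/
def Superhyperbolic (d N : ℕ) (γ : ℝ → Config d N) : Prop :=
  ∀ C t₀ : ℝ, ∃ t ≥ t₀, ∃ i j : Fin N, C * t < ‖γ t i - γ t j‖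

/-- Cluster fixed-time action potential `φ_A(z, z', τ)`. -/
def phiCluster (d N : ℕ) (G : ℝ) (m : Fin N → ℝ) (A : Finset (Fin N))
    (z z' : Config d N) (τ : ℝ) : ℝ :=
  sInf { c : ℝ | ∃ γ g : ℝ → Config d N, ACOn d N γ g 0 τ ∧
    (∀ i ∈ A, γ 0 i = z i) ∧ (∀ i ∈ A, γ τ i = z' i) ∧
    IntervalIntegrable (fun t => (1 / 2) * ∑ i ∈ A, m i * ‖g t i‖ ^ 2 +
      clusterPotential d N G m A (γ t)) volume 0 τ ∧
    c = ∫ t in (0:ℝ)..τ, ((1 / 2) * ∑ i ∈ A, m i * ‖g t i‖ ^ 2 +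
      clusterPotential d N G m A (γ t)) }

end

namespace NSH

open MeasureTheory intervalIntegral Set

noncomputable section

/-! ### Generic helpers -/

lemma abs_apply_le_norm {d : ℕ} (v : EuclideanSpace ℝ (Fin d)) (k : Fin d) : |v k| ≤ ‖v‖ := by
  rw [EuclideanSpace.norm_eq]
  have h1 : ‖v k‖ ^ 2 ≤ ∑ i, ‖v i‖ ^ 2 :=
    Finset.single_le_sum (f := fun i => ‖v i‖ ^ 2) (fun i _ => sq_nonneg _) (Finset.mem_univ k)
  calc |v k| = Real.sqrt (‖v k‖ ^ 2) := by
        rw [Real.sqrt_sq_eq_abs, Real.norm_eq_abs, abs_abs]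
    _ ≤ _ := Real.sqrt_le_sqrt h1

lemma kineticEnergy_nonneg {d N : ℕ} (m : Fin N → ℝ) (hm : ∀ i, 0 ≤ m i) (v : Config d N) :
    0 ≤ kineticEnergy d N m v := by
  unfold kineticEnergy
  have : (0:ℝ) ≤ ∑ i, m i * ‖v i‖ ^ 2 :=
    Finset.sum_nonneg fun i _ => mul_nonneg (hm i) (sq_nonneg _)
  linarith

lemma potentialEnergy_nonneg {d N : ℕ} (G : ℝ) (hG : 0 ≤ G) (m : Fin N → ℝ)
    (hm : ∀ i, 0 ≤ m i) (x : Config d N) : 0 ≤ potentialEnergy d N G m x := by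
  unfold potentialEnergy
  refine Finset.sum_nonneg fun i _ => Finset.sum_nonneg fun j _ => ?_
  split_ifs
  · exact div_nonneg (mul_nonneg (mul_nonneg hG (hm i)) (hm j)) (norm_nonneg _)
  · exact le_refl _

lemma lagrangian_add_nonneg {d N : ℕ} (G : ℝ) (hG : 0 ≤ G) (m : Fin N → ℝ)
    (hm : ∀ i, 0 ≤ m i) (h : ℝ) (hh : 0 ≤ h) (x v : Config d N) :
    0 ≤ lagrangian d N G m x v + h := by
  have h1 := kineticEnergy_nonneg m hm v
  have h2 := potentialEnergy_nonneg G hG m hm x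
  unfold lagrangian; linarith

/-- interval integrability of a pi-valued function from its components. -/
lemma intervalIntegrable_pi {d N : ℕ} {a b : ℝ} (hab : a ≤ b) {f : ℝ → Config d N}
    (hmeas : Measurable f) (h : ∀ i, IntervalIntegrable (fun t => f t i) volume a b) :
    IntervalIntegrable f volume a b := by
  rw [intervalIntegrable_iff_integrableOn_Ioc_of_le hab]
  refine Integrable.mono' (g := fun t => ∑ i, ‖f t i‖) ?_ hmeas.aestronglyMeasurable ?_
  · refine integrable_finset_sum _ fun i _ => ?_
    have := (h i).norm
    rw [intervalIntegrable_iff_integrableOn_Ioc_of_le hab] at this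
    exact this
  · filter_upwards with t
    refine (pi_norm_le_iff_of_nonneg (Finset.sum_nonneg fun i _ => norm_nonneg _)).2 fun i => ?_
    exact Finset.single_le_sum (f := fun i => ‖f t i‖) (fun i _ => norm_nonneg _) (Finset.mem_univ i)

lemma intervalIntegrable_comp_clm {E F : Type*} [NormedAddCommGroup E] [NormedSpace ℝ E]
    [NormedAddCommGroup F] [NormedSpace ℝ F] (L : E →L[ℝ] F) {f : ℝ → E} {a b : ℝ}
    (hf : IntervalIntegrable f volume a b) :
    IntervalIntegrable (fun t => L (f t)) volume a b :=
  ⟨L.integrable_comp hf.1, L.integrable_comp hf.2⟩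

lemma intervalIntegrable_apply {d N : ℕ} {f : ℝ → Config d N} {a b : ℝ}
    (hf : IntervalIntegrable f volume a b) (i : Fin N) :
    IntervalIntegrable (fun t => f t i) volume a b :=
  intervalIntegrable_comp_clm (ContinuousLinearMap.proj (R := ℝ)
    (φ := fun _ : Fin N => EuclideanSpace ℝ (Fin d)) i) hf

lemma intervalIntegral_apply {d N : ℕ} {f : ℝ → Config d N} {a b : ℝ}
    (hf : IntervalIntegrable f volume a b) (i : Fin N) :
    (∫ t in a..b, f t) i = ∫ t in a..b, f t i :=
  ((ContinuousLinearMap.proj (R := ℝ)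
    (φ := fun _ : Fin N => EuclideanSpace ℝ (Fin d)) i).intervalIntegral_comp_comm hf).symm

lemma measurable_rpow_const (c : ℝ) : Measurable (fun t : ℝ => t ^ c) :=
  measurable_of_continuousOn_compl_singleton 0
    (fun x hx => (Real.continuousAt_rpow_const x c (Or.inl hx)).continuousWithinAt)

lemma measurable_potentialEnergy {d N : ℕ} (G : ℝ) (m : Fin N → ℝ) :
    Measurable (potentialEnergy d N G m) := by
  unfold potentialEnergy
  refine Finset.measurable_sum _ fun i _ => Finset.measurable_sum _ fun j _ => ?_
  by_cases hij : i < j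
  · simp only [if_pos hij]
    exact measurable_const.div (((continuous_apply i).sub (continuous_apply j)).norm.measurable)
  · simp only [if_neg hij]; exact measurable_const

/-- a.e.-on-`Ioc` comparison of interval integrals. -/
lemma integral_le_of_le_Ioc {f M : ℝ → ℝ} {a b : ℝ} (hab : a ≤ b)
    (hf : IntervalIntegrable f volume a b) (hM : IntervalIntegrable M volume a b)
    (hle : ∀ t ∈ Set.Ioc a b, f t ≤ M t) :
    ∫ t in a..b, f t ≤ ∫ t in a..b, M t := by
  refine intervalIntegral.integral_mono_ae_restrict hab hf hM ?_
  have h1 : ∀ᵐ t ∂(volume.restrict (Set.Icc a b)), t ∈ Set.Icc a b :=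
    ae_restrict_mem measurableSet_Icc
  have h2 : ∀ᵐ t ∂(volume.restrict (Set.Icc a b)), t ≠ a := by
    refine ae_restrict_of_ae ?_
    have h0 : volume ({a} : Set ℝ) = 0 := measure_singleton a
    rw [ae_iff]
    convert h0 using 2
    ext t; simp
  filter_upwards [h1, h2] with t ht hta
  exact hle t ⟨lt_of_le_of_ne ht.1 (Ne.symm hta), ht.2⟩

lemma intervalIntegrable_of_bound_Ioc {f M : ℝ → ℝ} {a b : ℝ} (hab : a ≤ b)
    (hmeas : Measurable f) (hM : IntervalIntegrable M volume a b)
    (hb : ∀ t ∈ Set.Ioc a b, |f t| ≤ M t) : IntervalIntegrable f volume a b := by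
  rw [intervalIntegrable_iff_integrableOn_Ioc_of_le hab] at *
  refine Integrable.mono' hM hmeas.aestronglyMeasurable ?_
  filter_upwards [ae_restrict_mem measurableSet_Ioc] with t ht
  simpa [Real.norm_eq_abs] using hb t ht

/-! ### scalar calculus for the `t^(2/3)` profile -/

def F23 (s : ℝ) : ℝ := s ^ ((2:ℝ)/3)
def F23' (s : ℝ) : ℝ := (2/3) * s ^ (-(1:ℝ)/3)

lemma F23_zero : F23 0 = 0 := by
  unfold F23; rw [Real.zero_rpow]; norm_num

lemma F23_one : F23 1 = 1 := by unfold F23; exact Real.one_rpow _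

lemma F23_nonneg {s : ℝ} (hs : 0 ≤ s) : 0 ≤ F23 s := Real.rpow_nonneg hs _

lemma F23_pos {s : ℝ} (hs : 0 < s) : 0 < F23 s := Real.rpow_pos_of_pos hs _

lemma integral_F23' (a b : ℝ) : ∫ s in a..b, F23' s = F23 b - F23 a := by
  unfold F23 F23'
  rw [intervalIntegral.integral_const_mul, integral_rpow (Or.inl (by norm_num))]
  norm_num
  ring

lemma intervalIntegrable_F23' (a b : ℝ) : IntervalIntegrable F23' volume a b :=
  (intervalIntegrable_rpow' (by norm_num)).const_mul _

lemma measurable_F23' : Measurable F23' := (measurable_rpow_const _).const_mul _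

lemma continuous_F23 : Continuous F23 := by
  unfold F23
  exact Real.continuous_rpow_const (by norm_num)

end

end NSH
namespace NSH

open MeasureTheory intervalIntegral Set

noncomputable section

/-! ### sorting ranks -/

def rankOf {d N : ℕ} (x : Config d N) (k : Fin d) : Fin N → Fin N :=
  (Tuple.sort (fun i => x i k)).symm

lemma rankOf_le {d N : ℕ} (x : Config d N) (k : Fin d) {i j : Fin N}
    (hlt : rankOf x k i < rankOf x k j) : x i k ≤ x j k := by
  have h := Tuple.monotone_sort (fun i => x i k) (le_of_lt hlt)
  simpa [rankOf, Function.comp] using h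

/-- sign compatibility of coordinates and ranks. -/
lemma rankOf_sign {d N : ℕ} (x : Config d N) (k : Fin d) (i j : Fin N) :
    0 ≤ (x i k - x j k) * (((rankOf x k i : Fin N) : ℝ) - ((rankOf x k j : Fin N) : ℝ)) := by
  rcases lt_trichotomy (rankOf x k i) (rankOf x k j) with hc | hc | hc
  · have h1 : x i k ≤ x j k := rankOf_le x k hc
    have h2 : ((rankOf x k i : Fin N) : ℝ) ≤ ((rankOf x k j : Fin N) : ℝ) := by
      exact_mod_cast le_of_lt hc
    nlinarith
  · rw [hc]; simp
  · have h1 : x j k ≤ x i k := rankOf_le x k hc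
    have h2 : ((rankOf x k j : Fin N) : ℝ) ≤ ((rankOf x k i : Fin N) : ℝ) := by
      exact_mod_cast le_of_lt hc
    nlinarith

lemma rankOf_gap {d N : ℕ} (x : Config d N) (k : Fin d) {i j : Fin N} (hij : i ≠ j) :
    1 ≤ |((rankOf x k i : Fin N) : ℝ) - ((rankOf x k j : Fin N) : ℝ)| := by
  have hne : (rankOf x k i : Fin N) ≠ rankOf x k j := by
    intro hEq
    exact hij ((Tuple.sort (fun i => x i k)).symm.injective hEq)
  have hne' : ((rankOf x k i : Fin N) : ℕ) ≠ ((rankOf x k j : Fin N) : ℕ) :=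
    fun hEq => hne (Fin.ext hEq)
  rcases lt_or_gt_of_ne hne' with hc | hc
  · have : ((rankOf x k i : Fin N) : ℕ) + 1 ≤ ((rankOf x k j : Fin N) : ℕ) := hc
    have : ((rankOf x k i : Fin N) : ℝ) + 1 ≤ ((rankOf x k j : Fin N) : ℝ) := by exact_mod_cast this
    rw [abs_sub_comm, abs_of_nonneg (by linarith)]; linarith
  · have : ((rankOf x k j : Fin N) : ℕ) + 1 ≤ ((rankOf x k i : Fin N) : ℕ) := hc
    have : ((rankOf x k j : Fin N) : ℝ) + 1 ≤ ((rankOf x k i : Fin N) : ℝ) := by exact_mod_cast this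
    rw [abs_of_nonneg (by linarith)]; linarith

lemma rankOf_lt_N {d N : ℕ} (x : Config d N) (k : Fin d) (i : Fin N) :
    ((rankOf x k i : Fin N) : ℝ) ≤ (N : ℝ) := by
  have := (rankOf x k i).isLt
  exact_mod_cast le_of_lt (by exact_mod_cast this)

/-! ### the test curve -/

section Curve

variable {d N : ℕ} (x y : Config d N) (k₁ k₂ : Fin d)

def ev (k : Fin d) : EuclideanSpace ℝ (Fin d) := EuclideanSpace.single k 1

def SP : ℝ := ∑ i, ‖x i‖ + ∑ i, ‖y i‖

def Pp : ℝ := 1 + SP x y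

def Rr : ℝ := 100 * N * Pp x y

def T1 : ℝ := Rr x y

def T2 : ℝ := 2 * Pp x y + 6 * N * Rr x y

def Ttot : ℝ := T1 x y + T2 x y + T1 x y

/-- rank coefficients -/
def px (i : Fin N) : ℝ := ((rankOf x k₂ i : Fin N) : ℝ)
def py (i : Fin N) : ℝ := ((rankOf y k₂ i : Fin N) : ℝ)

def Aconf : Config d N := fun i => x i + (Rr x y * px x k₂ i) • ev k₂
def Bconf : Config d N := fun i => y i + (Rr x y * py y k₂ i) • ev k₂

def Xi1 (t : ℝ) : Config d N := fun i =>
  x i + ((Rr x y * px x k₂ i) * F23 (t / T1 x y)) • ev k₂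

def V1 (t : ℝ) : Config d N := fun i =>
  (((Rr x y * px x k₂ i) / T1 x y) * F23' (t / T1 x y)) • ev k₂

def Xi2 (t : ℝ) : Config d N := fun i =>
  Aconf x y k₂ i + ((t - T1 x y) / T2 x y) • (Bconf x y k₂ i - Aconf x y k₂ i)
    + ((4 * Rr x y * (i : ℝ)) * (((t - T1 x y) / T2 x y) * (1 - (t - T1 x y) / T2 x y))) • ev k₁

def V2 (t : ℝ) : Config d N := fun i =>
  (T2 x y)⁻¹ • (Bconf x y k₂ i - Aconf x y k₂ i)
    + ((4 * Rr x y * (i : ℝ)) * ((1 - 2 * ((t - T1 x y) / T2 x y)) * (T2 x y)⁻¹)) • ev k₁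

def Xi3 (t : ℝ) : Config d N := fun i =>
  y i + ((Rr x y * py y k₂ i) * F23 ((Ttot x y - t) / T1 x y)) • ev k₂

def V3 (t : ℝ) : Config d N := fun i =>
  ((-(Rr x y * py y k₂ i) / T1 x y) * F23' ((Ttot x y - t) / T1 x y)) • ev k₂

def curveT (t : ℝ) : Config d N :=
  if t ≤ T1 x y then Xi1 x y k₂ t
  else if t ≤ T1 x y + T2 x y then Xi2 x y k₁ k₂ t
  else Xi3 x y k₂ t

def velT (t : ℝ) : Config d N :=
  if t ≤ T1 x y then V1 x y k₂ t
  else if t ≤ T1 x y + T2 x y then V2 x y k₁ k₂ t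
  else V3 x y k₂ t

/-! basic positivity -/

lemma SP_nonneg : 0 ≤ SP x y :=
  add_nonneg (Finset.sum_nonneg fun _ _ => norm_nonneg _)
    (Finset.sum_nonneg fun _ _ => norm_nonneg _)

lemma Pp_ge_one : 1 ≤ Pp x y := by have := SP_nonneg x y; unfold Pp; linarith

lemma Rr_ge (hN : 2 ≤ N) : 200 ≤ Rr x y := by
  have h1 := Pp_ge_one x y
  have h2 : (2:ℝ) ≤ (N:ℝ) := by exact_mod_cast hN
  unfold Rr; nlinarith

lemma Rr_pos (hN : 2 ≤ N) : 0 < Rr x y := by have := Rr_ge x y hN; linarith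

lemma T1_pos (hN : 2 ≤ N) : 0 < T1 x y := Rr_pos x y hN

lemma T2_pos (hN : 2 ≤ N) : 0 < T2 x y := by
  have h1 := Pp_ge_one x y
  have h2 : (2:ℝ) ≤ (N:ℝ) := by exact_mod_cast hN
  have h3 := Rr_pos x y hN
  unfold T2; nlinarith

lemma Ttot_pos (hN : 2 ≤ N) : 0 < Ttot x y := by
  have := T1_pos x y hN; have := T2_pos x y hN; unfold Ttot; linarith

/-- norms of the bodies are bounded by `SP`. -/
lemma norm_x_le (i : Fin N) : ‖x i‖ ≤ SP x y := by
  unfold SP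
  have h1 : ‖x i‖ ≤ ∑ i, ‖x i‖ :=
    Finset.single_le_sum (f := fun i => ‖x i‖) (fun _ _ => norm_nonneg _) (Finset.mem_univ i)
  have h2 : (0:ℝ) ≤ ∑ i, ‖y i‖ := Finset.sum_nonneg fun _ _ => norm_nonneg _
  linarith

lemma norm_y_le (i : Fin N) : ‖y i‖ ≤ SP x y := by
  unfold SP
  have h1 : ‖y i‖ ≤ ∑ i, ‖y i‖ :=
    Finset.single_le_sum (f := fun i => ‖y i‖) (fun _ _ => norm_nonneg _) (Finset.mem_univ i)
  have h2 : (0:ℝ) ≤ ∑ i, ‖x i‖ := Finset.sum_nonneg fun _ _ => norm_nonneg _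
  linarith

/-! coordinates of `ev` -/

lemma ev_apply_self (k : Fin d) : ev (d := d) k k = 1 := by
  unfold ev; simp [EuclideanSpace.single_apply]

lemma ev_apply_ne {k l : Fin d} (h : l ≠ k) : ev (d := d) k l = 0 := by
  unfold ev; simp [EuclideanSpace.single_apply, h]

lemma norm_ev (k : Fin d) : ‖ev (d := d) k‖ = 1 := by
  unfold ev; rw [EuclideanSpace.norm_single]; norm_num

end Curve

end

end NSH
namespace NSH

open MeasureTheory intervalIntegral Set

noncomputable section

section Curve2

variable {d N : ℕ} (x y : Config d N) (k₁ k₂ : Fin d)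

lemma II.smul_const' {f : ℝ → ℝ} {a b : ℝ} (hf : IntervalIntegrable f volume a b)
    (c : EuclideanSpace ℝ (Fin d)) : IntervalIntegrable (fun t => f t • c) volume a b :=
  ⟨hf.1.smul_const c, hf.2.smul_const c⟩

lemma intervalIntegrable_F23'_div (T a b : ℝ) (hT : T ≠ 0) :
    IntervalIntegrable (fun t => F23' (t / T)) volume a b := by
  have h := (intervalIntegrable_F23' (a / T) (b / T)).comp_mul_right (c := T⁻¹)
  have e1 : a / T / T⁻¹ = a := by field_simp
  have e2 : b / T / T⁻¹ = b := by field_simp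
  rw [e1, e2] at h
  simpa [div_eq_mul_inv] using h

lemma intervalIntegrable_F23'_sub_div (T c a b : ℝ) (hT : T ≠ 0) :
    IntervalIntegrable (fun t => F23' ((c - t) / T)) volume a b := by
  have h := (intervalIntegrable_F23'_div T (c - a) (c - b) hT).comp_sub_left c
  have e1 : c - (c - a) = a := by ring
  have e2 : c - (c - b) = b := by ring
  rw [e1, e2] at h
  exact h

lemma measurable_V1 : Measurable (V1 x y k₂) := by
  rw [measurable_pi_iff]
  intro i
  exact ((measurable_F23'.comp (measurable_id.div_const _)).const_mul _).smul_const _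

lemma measurable_V3 : Measurable (V3 x y k₂) := by
  rw [measurable_pi_iff]
  intro i
  refine Measurable.smul_const ?_ _
  exact (measurable_F23'.comp ((measurable_const.sub measurable_id).div_const _)).const_mul _

lemma II_V1 {a b : ℝ} (hab : a ≤ b) (hN : 2 ≤ N) :
    IntervalIntegrable (V1 x y k₂) volume a b := by
  refine intervalIntegrable_pi hab (measurable_V1 x y k₂) fun i => ?_
  exact II.smul_const' (d := d) ((intervalIntegrable_F23'_div (T1 x y) a b
    (ne_of_gt (T1_pos x y hN))).const_mul _) _

lemma II_V3 {a b : ℝ} (hab : a ≤ b) (hN : 2 ≤ N) :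
    IntervalIntegrable (V3 x y k₂) volume a b := by
  refine intervalIntegrable_pi hab (measurable_V3 x y k₂) fun i => ?_
  exact II.smul_const' (d := d) ((intervalIntegrable_F23'_sub_div (T1 x y) (Ttot x y) a b
    (ne_of_gt (T1_pos x y hN))).const_mul _) _

lemma continuous_V2 : Continuous (V2 x y k₁ k₂) := by
  refine continuous_pi fun i => ?_
  refine continuous_const.add (Continuous.fun_smul ?_ continuous_const)
  fun_prop

lemma II_V2 (a b : ℝ) : IntervalIntegrable (V2 x y k₁ k₂) volume a b :=
  (continuous_V2 x y k₁ k₂).intervalIntegrable a b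

/-! endpoint matching -/

lemma Xi1_zero : Xi1 x y k₂ 0 = x := by
  funext i
  unfold Xi1
  rw [zero_div, F23_zero]
  simp

lemma Xi1_T1 (hN : 2 ≤ N) : Xi1 x y k₂ (T1 x y) = Aconf x y k₂ := by
  funext i
  unfold Xi1 Aconf
  rw [div_self (ne_of_gt (T1_pos x y hN)), F23_one, mul_one]

lemma Xi2_T1 : Xi2 x y k₁ k₂ (T1 x y) = Aconf x y k₂ := by
  funext i
  unfold Xi2
  simp

lemma Xi2_end (hN : 2 ≤ N) : Xi2 x y k₁ k₂ (T1 x y + T2 x y) = Bconf x y k₂ := by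
  funext i
  unfold Xi2
  rw [show T1 x y + T2 x y - T1 x y = T2 x y by ring, div_self (ne_of_gt (T2_pos x y hN))]
  simp

lemma Xi3_start (hN : 2 ≤ N) : Xi3 x y k₂ (T1 x y + T2 x y) = Bconf x y k₂ := by
  funext i
  unfold Xi3 Bconf
  rw [show Ttot x y - (T1 x y + T2 x y) = T1 x y by unfold Ttot; ring,
    div_self (ne_of_gt (T1_pos x y hN)), F23_one, mul_one]

lemma Xi3_end : Xi3 x y k₂ (Ttot x y) = y := by
  funext i
  unfold Xi3
  rw [sub_self, zero_div, F23_zero]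
  simp

/-! FTC identities -/

lemma int_V1 (hN : 2 ≤ N) (u : ℝ) (hu : 0 ≤ u) :
    ∫ t in (0:ℝ)..u, V1 x y k₂ t = Xi1 x y k₂ u - x := by
  have hT1 : (0:ℝ) < T1 x y := T1_pos x y hN
  have hT1ne : T1 x y ≠ 0 := ne_of_gt hT1
  have hII := II_V1 x y k₂ hu hN
  funext i
  rw [Pi.sub_apply, intervalIntegral_apply hII i]
  unfold V1 Xi1
  rw [intervalIntegral.integral_smul_const, intervalIntegral.integral_const_mul]
  have hint : ∫ t in (0:ℝ)..u, F23' (t / T1 x y) = T1 x y * F23 (u / T1 x y) := by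
    rw [intervalIntegral.integral_comp_div _ hT1ne, integral_F23', zero_div, F23_zero,
      smul_eq_mul]
    ring
  rw [hint]
  have : Rr x y * px x k₂ i / T1 x y * (T1 x y * F23 (u / T1 x y))
      = Rr x y * px x k₂ i * F23 (u / T1 x y) := by field_simp; try ring
  rw [this]
  abel

lemma hasDerivAt_Xi2 (t : ℝ) : HasDerivAt (Xi2 x y k₁ k₂) (V2 x y k₁ k₂ t) t := by
  rw [hasDerivAt_pi]
  intro i
  have hσ : HasDerivAt (fun u : ℝ => (u - T1 x y) / T2 x y) ((T2 x y)⁻¹) t := by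
    simpa [one_div] using ((hasDerivAt_id t).sub_const (T1 x y)).div_const (T2 x y)
  have h1 : HasDerivAt (fun u : ℝ => ((u - T1 x y) / T2 x y) • (Bconf x y k₂ i - Aconf x y k₂ i))
      ((T2 x y)⁻¹ • (Bconf x y k₂ i - Aconf x y k₂ i)) t := hσ.smul_const _
  have hprod : HasDerivAt
      (fun u : ℝ => ((u - T1 x y) / T2 x y) * (1 - (u - T1 x y) / T2 x y))
      ((T2 x y)⁻¹ * (1 - (t - T1 x y) / T2 x y)
        + ((t - T1 x y) / T2 x y) * (0 - (T2 x y)⁻¹)) t :=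
    hσ.mul ((hasDerivAt_const t 1).sub hσ)
  have h2 := ((hprod.const_mul (4 * Rr x y * (i : ℝ))).smul_const (ev (d := d) k₁))
  have h3 := (h1.const_add (Aconf x y k₂ i)).add h2
  have harg : 4 * Rr x y * (i : ℝ) * ((T2 x y)⁻¹ * (1 - (t - T1 x y) / T2 x y)
        + ((t - T1 x y) / T2 x y) * (0 - (T2 x y)⁻¹))
      = 4 * Rr x y * (i : ℝ) * ((1 - 2 * ((t - T1 x y) / T2 x y)) * (T2 x y)⁻¹) := by ring
  rw [harg] at h3
  exact h3

lemma int_V2 (u : ℝ) :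
    ∫ t in (T1 x y)..u, V2 x y k₁ k₂ t = Xi2 x y k₁ k₂ u - Xi2 x y k₁ k₂ (T1 x y) :=
  integral_eq_sub_of_hasDerivAt (fun s _ => hasDerivAt_Xi2 x y k₁ k₂ s)
    (II_V2 x y k₁ k₂ _ _)

lemma int_V3 (hN : 2 ≤ N) (u : ℝ) (hu : u ≤ Ttot x y) :
    ∫ t in (T1 x y + T2 x y)..u, V3 x y k₂ t = Xi3 x y k₂ u - Xi3 x y k₂ (T1 x y + T2 x y) := by
  have hT1 : (0:ℝ) < T1 x y := T1_pos x y hN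
  have hT1ne : T1 x y ≠ 0 := ne_of_gt hT1
  have hII : IntervalIntegrable (V3 x y k₂) volume (T1 x y + T2 x y) u := by
    rcases le_total (T1 x y + T2 x y) u with hc | hc
    · exact II_V3 x y k₂ hc hN
    · exact (II_V3 x y k₂ hc hN).symm
  funext i
  rw [Pi.sub_apply, intervalIntegral_apply hII i]
  unfold V3 Xi3
  rw [intervalIntegral.integral_smul_const, intervalIntegral.integral_const_mul]
  have hcomp : ∫ t in (T1 x y + T2 x y)..u, F23' ((Ttot x y - t) / T1 x y)
      = T1 x y * (1 - F23 ((Ttot x y - u) / T1 x y)) := by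
    rw [intervalIntegral.integral_comp_sub_left (fun w => F23' (w / T1 x y)) (Ttot x y)]
    rw [show Ttot x y - (T1 x y + T2 x y) = T1 x y by unfold Ttot; ring]
    rw [intervalIntegral.integral_comp_div _ hT1ne, integral_F23',
      div_self hT1ne, F23_one, smul_eq_mul]
    try ring
  rw [hcomp]
  have : -(Rr x y * py y k₂ i) / T1 x y * (T1 x y * (1 - F23 ((Ttot x y - u) / T1 x y)))
      = Rr x y * py y k₂ i * F23 ((Ttot x y - u) / T1 x y) - Rr x y * py y k₂ i := by
    field_simp
    try ring
  rw [this, sub_smul]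
  rw [show Ttot x y - (T1 x y + T2 x y) = T1 x y by unfold Ttot; ring,
    div_self hT1ne, F23_one, mul_one]
  abel

/-! the glued curve: integrability and ACOn -/

lemma velT_eq1 {t : ℝ} (ht : t ≤ T1 x y) : velT x y k₁ k₂ t = V1 x y k₂ t := by
  unfold velT; rw [if_pos ht]

lemma velT_eq2 {t : ℝ} (ht1 : T1 x y < t) (ht2 : t ≤ T1 x y + T2 x y) :
    velT x y k₁ k₂ t = V2 x y k₁ k₂ t := by
  unfold velT; rw [if_neg (not_le.2 ht1), if_pos ht2]

lemma velT_eq3 {t : ℝ} (ht : T1 x y + T2 x y < t) (hN : 2 ≤ N) :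
    velT x y k₁ k₂ t = V3 x y k₂ t := by
  have h2 : ¬ t ≤ T1 x y := by
    have := T2_pos x y hN; push_neg; linarith
  unfold velT; rw [if_neg h2, if_neg (not_le.2 ht)]

lemma curveT_eq1 {t : ℝ} (ht : t ≤ T1 x y) : curveT x y k₁ k₂ t = Xi1 x y k₂ t := by
  unfold curveT; rw [if_pos ht]

lemma curveT_eq2 {t : ℝ} (ht1 : T1 x y < t) (ht2 : t ≤ T1 x y + T2 x y) :
    curveT x y k₁ k₂ t = Xi2 x y k₁ k₂ t := by
  unfold curveT; rw [if_neg (not_le.2 ht1), if_pos ht2]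

lemma curveT_eq3 {t : ℝ} (ht : T1 x y + T2 x y < t) (hN : 2 ≤ N) :
    curveT x y k₁ k₂ t = Xi3 x y k₂ t := by
  have h2 : ¬ t ≤ T1 x y := by
    have := T2_pos x y hN; push_neg; linarith
  unfold curveT; rw [if_neg h2, if_neg (not_le.2 ht)]

lemma curveT_zero (hN : 2 ≤ N) : curveT x y k₁ k₂ 0 = x := by
  rw [curveT_eq1 x y k₁ k₂ (le_of_lt (T1_pos x y hN)), Xi1_zero]

lemma curveT_end (hN : 2 ≤ N) : curveT x y k₁ k₂ (Ttot x y) = y := by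
  have h1 := T1_pos x y hN
  rw [curveT_eq3 x y k₁ k₂ (by unfold Ttot; linarith) hN, Xi3_end]

lemma velT_II_1 (hN : 2 ≤ N) :
    IntervalIntegrable (velT x y k₁ k₂) volume 0 (T1 x y) := by
  have h1 : (0:ℝ) ≤ T1 x y := le_of_lt (T1_pos x y hN)
  rw [intervalIntegrable_iff_integrableOn_Ioc_of_le h1]
  have hII := II_V1 x y k₂ h1 hN
  rw [intervalIntegrable_iff_integrableOn_Ioc_of_le h1] at hII
  refine hII.congr_fun ?_ measurableSet_Ioc
  intro t ht
  exact (velT_eq1 x y k₁ k₂ ht.2).symm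

lemma velT_II_2 (hN : 2 ≤ N) :
    IntervalIntegrable (velT x y k₁ k₂) volume (T1 x y) (T1 x y + T2 x y) := by
  have h1 : T1 x y ≤ T1 x y + T2 x y := by have := T2_pos x y hN; linarith
  rw [intervalIntegrable_iff_integrableOn_Ioc_of_le h1]
  have hII := II_V2 x y k₁ k₂ (T1 x y) (T1 x y + T2 x y)
  rw [intervalIntegrable_iff_integrableOn_Ioc_of_le h1] at hII
  refine hII.congr_fun ?_ measurableSet_Ioc
  intro t ht
  exact (velT_eq2 x y k₁ k₂ ht.1 ht.2).symm

lemma velT_II_3 (hN : 2 ≤ N) :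
    IntervalIntegrable (velT x y k₁ k₂) volume (T1 x y + T2 x y) (Ttot x y) := by
  have h1 : T1 x y + T2 x y ≤ Ttot x y := by
    have := T1_pos x y hN; unfold Ttot; linarith
  rw [intervalIntegrable_iff_integrableOn_Ioc_of_le h1]
  have hII := II_V3 x y k₂ h1 hN
  rw [intervalIntegrable_iff_integrableOn_Ioc_of_le h1] at hII
  refine hII.congr_fun ?_ measurableSet_Ioc
  intro t ht
  exact (velT_eq3 x y k₁ k₂ ht.1 hN).symm

lemma velT_II (hN : 2 ≤ N) :
    IntervalIntegrable (velT x y k₁ k₂) volume 0 (Ttot x y) :=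
  ((velT_II_1 x y k₁ k₂ hN).trans (velT_II_2 x y k₁ k₂ hN)).trans (velT_II_3 x y k₁ k₂ hN)

lemma int_velT_1 (hN : 2 ≤ N) {u : ℝ} (hu0 : 0 ≤ u) (hu : u ≤ T1 x y) :
    ∫ s in (0:ℝ)..u, velT x y k₁ k₂ s = Xi1 x y k₂ u - x := by
  rw [intervalIntegral.integral_congr (g := V1 x y k₂) ?_, int_V1 x y k₂ hN u hu0]
  intro s hs
  rw [Set.uIcc_of_le hu0] at hs
  exact velT_eq1 x y k₁ k₂ (le_trans hs.2 hu)

lemma int_velT_2 (hN : 2 ≤ N) {u : ℝ} (hu0 : T1 x y ≤ u) (hu : u ≤ T1 x y + T2 x y) :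
    ∫ s in (T1 x y)..u, velT x y k₁ k₂ s = Xi2 x y k₁ k₂ u - Aconf x y k₂ := by
  have hcong : ∫ s in (T1 x y)..u, velT x y k₁ k₂ s = ∫ s in (T1 x y)..u, V2 x y k₁ k₂ s := by
    refine intervalIntegral.integral_congr_ae ?_
    filter_upwards with s hs
    rw [Set.uIoc_of_le hu0] at hs
    exact velT_eq2 x y k₁ k₂ hs.1 (le_trans hs.2 hu)
  rw [hcong, int_V2, Xi2_T1]

lemma int_velT_3 (hN : 2 ≤ N) {u : ℝ} (hu0 : T1 x y + T2 x y ≤ u) (hu : u ≤ Ttot x y) :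
    ∫ s in (T1 x y + T2 x y)..u, velT x y k₁ k₂ s = Xi3 x y k₂ u - Bconf x y k₂ := by
  have hcong : ∫ s in (T1 x y + T2 x y)..u, velT x y k₁ k₂ s
      = ∫ s in (T1 x y + T2 x y)..u, V3 x y k₂ s := by
    refine intervalIntegral.integral_congr_ae ?_
    filter_upwards with s hs
    rw [Set.uIoc_of_le hu0] at hs
    exact velT_eq3 x y k₁ k₂ hs.1 hN
  rw [hcong, int_V3 x y k₂ hN u hu, Xi3_start x y k₂ hN]

lemma acOn_curveT (hN : 2 ≤ N) :
    ACOn d N (curveT x y k₁ k₂) (velT x y k₁ k₂) 0 (Ttot x y) := by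
  have hT1 := T1_pos x y hN
  have hT2 := T2_pos x y hN
  refine ⟨velT_II x y k₁ k₂ hN, ?_⟩
  intro t ht
  rw [curveT_zero x y k₁ k₂ hN]
  rcases le_or_gt t (T1 x y) with hc1 | hc1
  · rw [curveT_eq1 x y k₁ k₂ hc1, int_velT_1 x y k₁ k₂ hN ht.1 hc1]
    abel
  · have hIa : IntervalIntegrable (velT x y k₁ k₂) volume 0 (T1 x y) :=
      velT_II_1 x y k₁ k₂ hN
    rcases le_or_gt t (T1 x y + T2 x y) with hc2 | hc2
    · have hIb : IntervalIntegrable (velT x y k₁ k₂) volume (T1 x y) t :=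
        (velT_II_2 x y k₁ k₂ hN).mono_set (by
          rw [Set.uIcc_of_le (le_of_lt hc1), Set.uIcc_of_le (by linarith)]
          exact Set.Icc_subset_Icc le_rfl hc2)
      rw [← intervalIntegral.integral_add_adjacent_intervals hIa hIb]
      rw [int_velT_1 x y k₁ k₂ hN (le_of_lt hT1) le_rfl,
        int_velT_2 x y k₁ k₂ hN (le_of_lt hc1) hc2, Xi1_T1 x y k₂ hN,
        curveT_eq2 x y k₁ k₂ hc1 hc2]
      abel
    · have h12 : T1 x y ≤ T1 x y + T2 x y := by linarith
      have hIb : IntervalIntegrable (velT x y k₁ k₂) volume (T1 x y) (T1 x y + T2 x y) :=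
        velT_II_2 x y k₁ k₂ hN
      have hIc : IntervalIntegrable (velT x y k₁ k₂) volume (T1 x y + T2 x y) t :=
        (velT_II_3 x y k₁ k₂ hN).mono_set (by
          rw [Set.uIcc_of_le (le_of_lt hc2), Set.uIcc_of_le (by
            unfold Ttot; linarith)]
          exact Set.Icc_subset_Icc le_rfl ht.2)
      rw [← intervalIntegral.integral_add_adjacent_intervals (hIa.trans hIb) hIc,
        ← intervalIntegral.integral_add_adjacent_intervals hIa hIb]
      rw [int_velT_1 x y k₁ k₂ hN (le_of_lt hT1) le_rfl,
        int_velT_2 x y k₁ k₂ hN h12 le_rfl,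
        int_velT_3 x y k₁ k₂ hN (le_of_lt hc2) ht.2,
        Xi1_T1 x y k₂ hN, Xi2_end x y k₁ k₂ hN,
        curveT_eq3 x y k₁ k₂ hc2 hN]
      abel

end Curve2

end

end NSH
namespace NSH

/-- key spread estimate: if `u` and `w` have the same sign and `|w| ≥ 1`, `c ≥ 0`,
then `|u + c w| ≥ c`. -/
lemma key_sep {u w c : ℝ} (hc : 0 ≤ c) (hsign : 0 ≤ u * w) (hw : 1 ≤ |w|) :
    c ≤ |u + c * w| := by
  rcases abs_cases w with ⟨hw1, hw2⟩ | ⟨hw1, hw2⟩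
  · have hwpos : 1 ≤ w := hw1 ▸ hw
    have hu : 0 ≤ u := by nlinarith
    have : c ≤ u + c * w := by nlinarith
    exact this.trans (le_abs_self _)
  · have hwneg : w ≤ -1 := by rw [hw1] at hw; linarith
    have hu : u ≤ 0 := by nlinarith
    have : u + c * w ≤ -c := by nlinarith
    calc c ≤ -(u + c * w) := by linarith
      _ ≤ |u + c * w| := neg_le_abs _

/-- case A/B of the middle-piece separation (near an endpoint, use the `k₂` coordinate). -/
lemma scalarA {n P s a2 b2 : ℝ} (hn : 2 ≤ n) (hP : 1 ≤ P) (hs0 : 0 ≤ s) (hs1 : 4*n*s ≤ 1)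
    (ha2 : 100*n*P ≤ |a2|) (hb2 : |b2| ≤ 2*P + 100*n^2*P) :
    1 ≤ |(1-s)*a2 + s*b2| := by
  have hs8 : s ≤ 1/8 := by nlinarith
  have hsb : s * |b2| ≤ s * (2*P + 100*n^2*P) :=
    mul_le_mul_of_nonneg_left hb2 hs0
  have hkey : 1 + s * |b2| ≤ (1-s) * |a2| := by
    have h1 : (1-s) * (100*n*P) ≤ (1-s) * |a2| :=
      mul_le_mul_of_nonneg_left ha2 (by linarith)
    have h2 : s * (2*P) ≤ P := by nlinarith
    have h3 : s * (100*n^2*P) ≤ 25*n*P := by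
      nlinarith [mul_le_mul_of_nonneg_right hs1 (by positivity : (0:ℝ) ≤ 25*n*P)]
    nlinarith
  rcases abs_cases a2 with ⟨he, hpos⟩ | ⟨he, hneg⟩
  · have h4 : 1 + s*|b2| ≤ (1-s) * a2 := by rw [he] at hkey; linarith
    have h5 : -(s*|b2|) ≤ s * b2 := by
      have := neg_abs_le b2
      nlinarith [abs_nonneg b2]
    have : 1 ≤ (1-s)*a2 + s*b2 := by linarith
    exact this.trans (le_abs_self _)
  · have h4 : (1-s) * a2 ≤ -(1 + s*|b2|) := by
      have : (1-s) * (-a2) ≥ 1 + s*|b2| := by rw [he] at hkey; linarith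
      nlinarith
    have h5 : s * b2 ≤ s*|b2| := by
      nlinarith [le_abs_self b2]
    have : (1-s)*a2 + s*b2 ≤ -1 := by linarith
    calc (1:ℝ) ≤ -((1-s)*a2 + s*b2) := by linarith
      _ ≤ |(1-s)*a2 + s*b2| := neg_le_abs _

/-- case C of the middle-piece separation (interior, use the `k₁` detour coordinate). -/
lemma scalarC {n P s a1 b1 w : ℝ} (hn : 2 ≤ n) (hP : 1 ≤ P)
    (hs0 : 0 ≤ s) (hs1 : s ≤ 1) (hns0 : 1 ≤ 4*n*s) (hns1 : 1 ≤ 4*n*(1-s))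
    (ha1 : |a1| ≤ 2*P) (hb1 : |b1| ≤ 2*P) (hw : 1 ≤ |w|) :
    1 ≤ |(1-s)*a1 + s*b1 + 4*(100*n*P)*(s*(1-s))*w| := by
  set D := 4*(100*n*P)*(s*(1-s)) with hDdef
  have hq : 3*n ≤ 16*n^2*(s*(1-s)) := by
    nlinarith [mul_nonneg (by linarith : (0:ℝ) ≤ 4*n*s - 1)
      (by linarith : (0:ℝ) ≤ 4*n*(1-s) - 1)]
  have hq' : 3 ≤ 16*n*(s*(1-s)) := by nlinarith [hq, hn]
  have hD : 75*P ≤ D := by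
    rw [hDdef]
    nlinarith [mul_le_mul_of_nonneg_left hq' (by positivity : (0:ℝ) ≤ 25*P)]
  have hD0 : 0 ≤ D := by nlinarith
  set u := (1-s)*a1 + s*b1 with hudef
  have hint : |u| ≤ 2*P := by
    have h1 : |(1-s)*a1| ≤ (1-s)*(2*P) := by
      rw [abs_mul, abs_of_nonneg (by linarith : (0:ℝ) ≤ 1-s)]
      exact mul_le_mul_of_nonneg_left ha1 (by linarith)
    have h2 : |s*b1| ≤ s*(2*P) := by
      rw [abs_mul, abs_of_nonneg hs0]
      exact mul_le_mul_of_nonneg_left hb1 hs0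
    calc |u| ≤ |(1-s)*a1| + |s*b1| := abs_add_le _ _
      _ ≤ (1-s)*(2*P) + s*(2*P) := add_le_add h1 h2
      _ = 2*P := by ring
  have h5 : D ≤ |D*w| := by
    rw [abs_mul, abs_of_nonneg hD0]
    nlinarith [mul_le_mul_of_nonneg_left hw hD0]
  have h6 : |D*w| - |u| ≤ |u + D*w| := by
    have := abs_sub_abs_le_abs_sub (D*w) (-u)
    rw [abs_neg, sub_neg_eq_add, show D*w + u = u + D*w from add_comm _ _] at this
    exact this
  have : 1 ≤ |u + D*w| := by linarith
  simpa [hudef] using this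

end NSH
namespace NSH

open MeasureTheory intervalIntegral Set

noncomputable section

lemma fin_gap {N : ℕ} {i j : Fin N} (hij : i ≠ j) : 1 ≤ |((i:ℕ):ℝ) - ((j:ℕ):ℝ)| := by
  have hne : ((i:ℕ):ℕ) ≠ (j:ℕ) := fun hEq => hij (Fin.ext hEq)
  rcases lt_or_gt_of_ne hne with hc | hc
  · have : ((i:ℕ):ℝ) + 1 ≤ ((j:ℕ):ℝ) := by exact_mod_cast hc
    rw [abs_sub_comm, abs_of_nonneg (by linarith)]; linarith
  · have : ((j:ℕ):ℝ) + 1 ≤ ((i:ℕ):ℝ) := by exact_mod_cast hc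
    rw [abs_of_nonneg (by linarith)]; linarith

section Sep

variable {d N : ℕ} (x y : Config d N) (k₁ k₂ : Fin d)

lemma px_nonneg (i : Fin N) : 0 ≤ px x k₂ i := by
  unfold px; positivity

lemma px_le (i : Fin N) : px x k₂ i ≤ (N:ℝ) := rankOf_lt_N x k₂ i

lemma py_nonneg (i : Fin N) : 0 ≤ py y k₂ i := by
  unfold py; positivity

lemma py_le (i : Fin N) : py y k₂ i ≤ (N:ℝ) := rankOf_lt_N y k₂ i

lemma abs_coord_x (i : Fin N) (k : Fin d) : |x i k| ≤ Pp x y - 1 := by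
  have h1 := abs_apply_le_norm (x i) k
  have h2 := norm_x_le x y i
  unfold Pp; linarith

lemma abs_coord_y (i : Fin N) (k : Fin d) : |y i k| ≤ Pp x y - 1 := by
  have h1 := abs_apply_le_norm (y i) k
  have h2 := norm_y_le x y i
  unfold Pp; linarith

/-- separation along the first piece. -/
lemma sep1 (hN : 2 ≤ N) {t : ℝ} (ht0 : 0 ≤ t) {i j : Fin N} (hij : i ≠ j) :
    Rr x y * F23 (t / T1 x y) ≤ ‖Xi1 x y k₂ t i - Xi1 x y k₂ t j‖ := by
  have hT1 := T1_pos x y hN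
  have hc : 0 ≤ Rr x y * F23 (t / T1 x y) :=
    mul_nonneg (le_of_lt (Rr_pos x y hN)) (F23_nonneg (div_nonneg ht0 (le_of_lt hT1)))
  have hcoord : (Xi1 x y k₂ t i - Xi1 x y k₂ t j) k₂
      = (x i k₂ - x j k₂) + (Rr x y * F23 (t / T1 x y)) * (px x k₂ i - px x k₂ j) := by
    unfold Xi1
    simp only [PiLp.sub_apply, PiLp.add_apply, PiLp.smul_apply, smul_eq_mul,
      ev_apply_self]
    ring
  have hsign : 0 ≤ (x i k₂ - x j k₂) * (px x k₂ i - px x k₂ j) := rankOf_sign x k₂ i j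
  have hgap : 1 ≤ |px x k₂ i - px x k₂ j| := rankOf_gap x k₂ hij
  calc Rr x y * F23 (t / T1 x y)
      ≤ |(x i k₂ - x j k₂) + (Rr x y * F23 (t / T1 x y)) * (px x k₂ i - px x k₂ j)| :=
        key_sep hc hsign hgap
    _ = |(Xi1 x y k₂ t i - Xi1 x y k₂ t j) k₂| := by rw [hcoord]
    _ ≤ ‖Xi1 x y k₂ t i - Xi1 x y k₂ t j‖ := abs_apply_le_norm _ _

/-- separation along the third piece. -/
lemma sep3 (hN : 2 ≤ N) {t : ℝ} (ht0 : t ≤ Ttot x y) {i j : Fin N} (hij : i ≠ j) :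
    Rr x y * F23 ((Ttot x y - t) / T1 x y) ≤ ‖Xi3 x y k₂ t i - Xi3 x y k₂ t j‖ := by
  have hT1 := T1_pos x y hN
  have hc : 0 ≤ Rr x y * F23 ((Ttot x y - t) / T1 x y) :=
    mul_nonneg (le_of_lt (Rr_pos x y hN))
      (F23_nonneg (div_nonneg (by linarith) (le_of_lt hT1)))
  have hcoord : (Xi3 x y k₂ t i - Xi3 x y k₂ t j) k₂
      = (y i k₂ - y j k₂)
        + (Rr x y * F23 ((Ttot x y - t) / T1 x y)) * (py y k₂ i - py y k₂ j) := by
    unfold Xi3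
    simp only [PiLp.sub_apply, PiLp.add_apply, PiLp.smul_apply, smul_eq_mul,
      ev_apply_self]
    ring
  have hsign : 0 ≤ (y i k₂ - y j k₂) * (py y k₂ i - py y k₂ j) := rankOf_sign y k₂ i j
  have hgap : 1 ≤ |py y k₂ i - py y k₂ j| := rankOf_gap y k₂ hij
  calc Rr x y * F23 ((Ttot x y - t) / T1 x y)
      ≤ |(y i k₂ - y j k₂) + (Rr x y * F23 ((Ttot x y - t) / T1 x y)) * (py y k₂ i - py y k₂ j)| :=
        key_sep hc hsign hgap
    _ = |(Xi3 x y k₂ t i - Xi3 x y k₂ t j) k₂| := by rw [hcoord]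
    _ ≤ ‖Xi3 x y k₂ t i - Xi3 x y k₂ t j‖ := abs_apply_le_norm _ _

/-- separation along the middle piece. -/
lemma sep2 (hN : 2 ≤ N) (hk : k₁ ≠ k₂) {t : ℝ} (ht1 : T1 x y ≤ t)
    (ht2 : t ≤ T1 x y + T2 x y) {i j : Fin N} (hij : i ≠ j) :
    1 ≤ ‖Xi2 x y k₁ k₂ t i - Xi2 x y k₁ k₂ t j‖ := by
  have hT2 := T2_pos x y hN
  have hP := Pp_ge_one x y
  have hn : (2:ℝ) ≤ (N:ℝ) := by exact_mod_cast hN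
  have hRr := Rr_pos x y hN
  set n : ℝ := (N:ℝ) with hndef
  set P : ℝ := Pp x y with hPdef
  set s : ℝ := (t - T1 x y) / T2 x y with hsdef
  have hs0 : 0 ≤ s := div_nonneg (by linarith) (le_of_lt hT2)
  have hs1 : s ≤ 1 := by
    rw [hsdef, div_le_one hT2]; linarith
  set a2 : ℝ := (x i k₂ - x j k₂) + Rr x y * (px x k₂ i - px x k₂ j) with ha2def
  set b2 : ℝ := (y i k₂ - y j k₂) + Rr x y * (py y k₂ i - py y k₂ j) with hb2def
  set a1 : ℝ := x i k₁ - x j k₁ with ha1def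
  set b1 : ℝ := y i k₁ - y j k₁ with hb1def
  have hcoord2 : (Xi2 x y k₁ k₂ t i - Xi2 x y k₁ k₂ t j) k₂ = (1-s)*a2 + s*b2 := by
    unfold Xi2 Aconf Bconf
    simp only [PiLp.sub_apply, PiLp.add_apply, PiLp.smul_apply, smul_eq_mul,
      ev_apply_self, ev_apply_ne (Ne.symm hk), ha2def, hb2def, hsdef]
    ring
  have hcoord1 : (Xi2 x y k₁ k₂ t i - Xi2 x y k₁ k₂ t j) k₁
      = ((1-s)*a1 + s*b1) + 4*(100*n*P)*(s*(1-s))*(((i:ℕ):ℝ) - ((j:ℕ):ℝ)) := by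
    unfold Xi2 Aconf Bconf Rr
    simp only [PiLp.sub_apply, PiLp.add_apply, PiLp.smul_apply, smul_eq_mul,
      ev_apply_self, ev_apply_ne hk, ha1def, hb1def, hsdef, hndef, hPdef]
    ring
  have hRreq : Rr x y = 100*n*P := rfl
  have ha2lb : 100*n*P ≤ |a2| := by
    rw [← hRreq]
    exact key_sep (le_of_lt hRr) (rankOf_sign x k₂ i j) (rankOf_gap x k₂ hij)
  have hb2lb : 100*n*P ≤ |b2| := by
    rw [← hRreq]
    exact key_sep (le_of_lt hRr) (rankOf_sign y k₂ i j) (rankOf_gap y k₂ hij)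
  have habs2 : ∀ u v pu pv : ℝ, |u| ≤ P - 1 → |v| ≤ P - 1 → 0 ≤ pu → pu ≤ n → 0 ≤ pv →
      pv ≤ n → |(u - v) + Rr x y * (pu - pv)| ≤ 2*P + 100*n^2*P := by
    intro u v pu pv hu hv hpu0 hpu1 hpv0 hpv1
    have h1 : |u - v| ≤ 2*P - 2 := by
      calc |u - v| ≤ |u| + |v| := abs_sub _ _
        _ ≤ 2*P - 2 := by linarith
    have h2 : |Rr x y * (pu - pv)| ≤ 100*n^2*P := by
      rw [abs_mul, abs_of_nonneg (le_of_lt hRr), hRreq]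
      have h3 : |pu - pv| ≤ n := by
        rw [abs_le]; constructor <;> linarith
      calc 100*n*P * |pu - pv| ≤ 100*n*P * n :=
            mul_le_mul_of_nonneg_left h3 (by positivity)
        _ = 100*n^2*P := by ring
    calc |(u - v) + Rr x y * (pu - pv)| ≤ |u - v| + |Rr x y * (pu - pv)| := abs_add_le _ _
      _ ≤ 2*P + 100*n^2*P := by linarith
  have ha2ub : |a2| ≤ 2*P + 100*n^2*P := by
    rw [ha2def, show (x i k₂ - x j k₂) = (x i k₂) - (x j k₂) from rfl]
    exact habs2 _ _ _ _ (abs_coord_x x y i k₂) (abs_coord_x x y j k₂)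
      (px_nonneg x k₂ i) (px_le x k₂ i) (px_nonneg x k₂ j) (px_le x k₂ j)
  have hb2ub : |b2| ≤ 2*P + 100*n^2*P := by
    rw [hb2def]
    exact habs2 _ _ _ _ (abs_coord_y x y i k₂) (abs_coord_y x y j k₂)
      (py_nonneg y k₂ i) (py_le y k₂ i) (py_nonneg y k₂ j) (py_le y k₂ j)
  rcases le_or_gt (4*n*s) 1 with hcA | hcA
  · have h := scalarA hn hP hs0 hcA ha2lb hb2ub
    calc (1:ℝ) ≤ |(1-s)*a2 + s*b2| := h
      _ = |(Xi2 x y k₁ k₂ t i - Xi2 x y k₁ k₂ t j) k₂| := by rw [hcoord2]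
      _ ≤ _ := abs_apply_le_norm _ _
  rcases le_or_gt (4*n*(1-s)) 1 with hcB | hcB
  · have h := scalarA hn hP (by linarith) hcB hb2lb ha2ub
    have heq : (1-(1-s))*b2 + (1-s)*a2 = (1-s)*a2 + s*b2 := by ring
    rw [heq] at h
    calc (1:ℝ) ≤ |(1-s)*a2 + s*b2| := h
      _ = |(Xi2 x y k₁ k₂ t i - Xi2 x y k₁ k₂ t j) k₂| := by rw [hcoord2]
      _ ≤ _ := abs_apply_le_norm _ _
  · have ha1ub : |a1| ≤ 2*P := by
      rw [ha1def]
      calc |x i k₁ - x j k₁| ≤ |x i k₁| + |x j k₁| := abs_sub _ _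
        _ ≤ 2*P := by
            have := abs_coord_x x y i k₁; have := abs_coord_x x y j k₁; linarith
    have hb1ub : |b1| ≤ 2*P := by
      rw [hb1def]
      calc |y i k₁ - y j k₁| ≤ |y i k₁| + |y j k₁| := abs_sub _ _
        _ ≤ 2*P := by
            have := abs_coord_y x y i k₁; have := abs_coord_y x y j k₁; linarith
    have h := scalarC hn hP hs0 hs1 (by linarith) (by linarith) ha1ub hb1ub (fin_gap hij)
    calc (1:ℝ) ≤ |(1-s)*a1 + s*b1 + 4*(100*n*P)*(s*(1-s))*(((i:ℕ):ℝ) - ((j:ℕ):ℝ))| := h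
      _ = |(Xi2 x y k₁ k₂ t i - Xi2 x y k₁ k₂ t j) k₁| := by rw [hcoord1]
      _ ≤ _ := abs_apply_le_norm _ _

/-- velocity bound on the middle piece. -/
lemma nv2 (hN : 2 ≤ N) (hk : k₁ ≠ k₂) {t : ℝ} (ht1 : T1 x y ≤ t)
    (ht2 : t ≤ T1 x y + T2 x y) (i : Fin N) : ‖V2 x y k₁ k₂ t i‖ ≤ 1 := by
  have hT2 := T2_pos x y hN
  have hP := Pp_ge_one x y
  have hn : (2:ℝ) ≤ (N:ℝ) := by exact_mod_cast hN
  have hRr := Rr_pos x y hN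
  set s : ℝ := (t - T1 x y) / T2 x y with hsdef
  have hs0 : 0 ≤ s := div_nonneg (by linarith) (le_of_lt hT2)
  have hs1 : s ≤ 1 := by rw [hsdef, div_le_one hT2]; linarith
  have hBA : ‖Bconf x y k₂ i - Aconf x y k₂ i‖ ≤ 2*(Pp x y) + 2*(Rr x y)*(N:ℝ) := by
    unfold Bconf Aconf
    calc ‖(y i + (Rr x y * py y k₂ i) • ev k₂) - (x i + (Rr x y * px x k₂ i) • ev k₂)‖
        ≤ ‖y i‖ + ‖(Rr x y * py y k₂ i) • ev (d := d) k₂‖ + ‖x i‖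
          + ‖(Rr x y * px x k₂ i) • ev (d := d) k₂‖ := by
          have := norm_add_le (y i) ((Rr x y * py y k₂ i) • ev (d := d) k₂)
          have := norm_add_le (x i) ((Rr x y * px x k₂ i) • ev (d := d) k₂)
          have := norm_sub_le (y i + (Rr x y * py y k₂ i) • ev (d := d) k₂)
            (x i + (Rr x y * px x k₂ i) • ev (d := d) k₂)
          linarith
      _ ≤ 2*(Pp x y) + 2*(Rr x y)*(N:ℝ) := by
          rw [norm_smul, norm_smul, norm_ev, Real.norm_eq_abs, Real.norm_eq_abs]
          have h1 := norm_x_le x y i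
          have h2 := norm_y_le x y i
          have h3 : |Rr x y * py y k₂ i| ≤ Rr x y * (N:ℝ) := by
            rw [abs_mul, abs_of_nonneg (le_of_lt hRr), abs_of_nonneg (py_nonneg y k₂ i)]
            exact mul_le_mul_of_nonneg_left (py_le y k₂ i) (le_of_lt hRr)
          have h4 : |Rr x y * px x k₂ i| ≤ Rr x y * (N:ℝ) := by
            rw [abs_mul, abs_of_nonneg (le_of_lt hRr), abs_of_nonneg (px_nonneg x k₂ i)]
            exact mul_le_mul_of_nonneg_left (px_le x k₂ i) (le_of_lt hRr)
          unfold Pp at *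
          unfold SP at *
          nlinarith [SP_nonneg x y]
  have hn2 : ‖(T2 x y)⁻¹ • (Bconf x y k₂ i - Aconf x y k₂ i)‖
      ≤ (2*(Pp x y) + 2*(Rr x y)*(N:ℝ)) * (T2 x y)⁻¹ := by
    rw [norm_smul, Real.norm_eq_abs, abs_of_nonneg (by positivity : (0:ℝ) ≤ (T2 x y)⁻¹)]
    rw [mul_comm]
    exact mul_le_mul_of_nonneg_right hBA (by positivity)
  have hdet : ‖((4 * Rr x y * (i : ℝ)) * ((1 - 2*s) * (T2 x y)⁻¹)) • ev (d := d) k₁‖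
      ≤ 4 * Rr x y * (N:ℝ) * (T2 x y)⁻¹ := by
    rw [norm_smul, norm_ev, mul_one, Real.norm_eq_abs]
    have h3 : |(i : ℝ)| ≤ (N:ℝ) := by
      rw [abs_of_nonneg (by positivity)]
      exact_mod_cast le_of_lt i.isLt
    have h4 : |1 - 2*s| ≤ 1 := by rw [abs_le]; constructor <;> linarith
    calc |4 * Rr x y * (i : ℝ) * ((1 - 2*s) * (T2 x y)⁻¹)|
        = (4 * Rr x y) * |(i : ℝ)| * (|1 - 2*s| * (T2 x y)⁻¹) := by
          simp only [abs_mul]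
          rw [abs_of_nonneg (le_of_lt hRr),
            abs_of_nonneg (by positivity : (0:ℝ) ≤ (T2 x y)⁻¹),
            abs_of_nonneg (by norm_num : (0:ℝ) ≤ (4:ℝ))]
      _ ≤ (4 * Rr x y) * (N:ℝ) * (1 * (T2 x y)⁻¹) := by
          refine mul_le_mul ?_ ?_ (by positivity) (by positivity)
          · exact mul_le_mul_of_nonneg_left h3 (by positivity)
          · exact mul_le_mul_of_nonneg_right h4 (by positivity)
      _ = 4 * Rr x y * (N:ℝ) * (T2 x y)⁻¹ := by ring
  have hsum : ‖V2 x y k₁ k₂ t i‖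
      ≤ (2*(Pp x y) + 2*(Rr x y)*(N:ℝ)) * (T2 x y)⁻¹
        + 4 * Rr x y * (N:ℝ) * (T2 x y)⁻¹ := by
    refine le_trans (norm_add_le _ _) ?_
    exact add_le_add hn2 hdet
  have hT2eq : 2*(Pp x y) + 2*(Rr x y)*(N:ℝ) + 4*(Rr x y)*(N:ℝ) = T2 x y := by
    unfold T2; ring
  calc ‖V2 x y k₁ k₂ t i‖
      ≤ (2*(Pp x y) + 2*(Rr x y)*(N:ℝ) + 4*(Rr x y)*(N:ℝ)) * (T2 x y)⁻¹ := by
        refine le_trans hsum (le_of_eq ?_); ring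
    _ = T2 x y * (T2 x y)⁻¹ := by rw [hT2eq]
    _ = 1 := mul_inv_cancel₀ (ne_of_gt hT2)

end Sep

end

end NSH
namespace NSH

open MeasureTheory intervalIntegral Set

noncomputable section

/-! ### Ioo variants of the comparison helpers -/

lemma ae_ne_restrict {s : Set ℝ} (a : ℝ) : ∀ᵐ t ∂(volume.restrict s), t ≠ a := by
  refine ae_restrict_of_ae ?_
  have h0 : volume ({a} : Set ℝ) = 0 := measure_singleton a
  rw [ae_iff]
  convert h0 using 2
  ext t; simp

lemma integral_le_of_le_Ioo {f M : ℝ → ℝ} {a b : ℝ} (hab : a ≤ b)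
    (hf : IntervalIntegrable f volume a b) (hM : IntervalIntegrable M volume a b)
    (hle : ∀ t ∈ Set.Ioo a b, f t ≤ M t) :
    ∫ t in a..b, f t ≤ ∫ t in a..b, M t := by
  refine intervalIntegral.integral_mono_ae_restrict hab hf hM ?_
  filter_upwards [ae_restrict_mem measurableSet_Icc, ae_ne_restrict (s := Set.Icc a b) a,
    ae_ne_restrict (s := Set.Icc a b) b] with t ht hta htb
  exact hle t ⟨lt_of_le_of_ne ht.1 (Ne.symm hta), lt_of_le_of_ne ht.2 htb⟩

lemma intervalIntegrable_of_bound_Ioo {f M : ℝ → ℝ} {a b : ℝ} (hab : a ≤ b)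
    (hmeas : Measurable f) (hM : IntervalIntegrable M volume a b)
    (hb : ∀ t ∈ Set.Ioo a b, |f t| ≤ M t) : IntervalIntegrable f volume a b := by
  rw [intervalIntegrable_iff_integrableOn_Ioc_of_le hab] at *
  refine Integrable.mono' hM hmeas.aestronglyMeasurable ?_
  filter_upwards [ae_restrict_mem measurableSet_Ioc, ae_ne_restrict (s := Set.Ioc a b) b]
    with t ht htb
  simpa [Real.norm_eq_abs] using hb t ⟨ht.1, lt_of_le_of_ne ht.2 htb⟩

/-! ### rpow facts -/

lemma rpow_neg23 {σ : ℝ} (hσ : 0 ≤ σ) : σ ^ (-(2:ℝ)/3) = (F23 σ)⁻¹ := by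
  unfold F23
  rw [show -(2:ℝ)/3 = -((2:ℝ)/3) from by norm_num, Real.rpow_neg hσ]

lemma sqF23' {σ : ℝ} (hσ : 0 < σ) : (F23' σ)^2 ≤ σ ^ (-(2:ℝ)/3) := by
  unfold F23'
  rw [mul_pow, ← Real.rpow_natCast (σ ^ (-(1:ℝ)/3)) 2, ← Real.rpow_mul hσ.le]
  have he : (-(1:ℝ)/3) * ((2:ℕ):ℝ) = -(2:ℝ)/3 := by push_cast; ring
  rw [he]
  nlinarith [Real.rpow_nonneg hσ.le (-(2:ℝ)/3)]

lemma II_rpow_div (r T a b : ℝ) (hr : -1 < r) (hT : T ≠ 0) :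
    IntervalIntegrable (fun t => (t/T) ^ r) volume a b := by
  have h := (intervalIntegrable_rpow' (a := a/T) (b := b/T) hr).comp_mul_right (c := T⁻¹)
  have e1 : a / T / T⁻¹ = a := by field_simp
  have e2 : b / T / T⁻¹ = b := by field_simp
  rw [e1, e2] at h
  simpa [div_eq_mul_inv] using h

lemma int_rpow23_div (T : ℝ) (hT : 0 < T) :
    ∫ t in (0:ℝ)..T, (t/T) ^ (-(2:ℝ)/3) = 3*T := by
  rw [intervalIntegral.integral_comp_div (fun u => u ^ (-(2:ℝ)/3)) (ne_of_gt hT)]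
  rw [zero_div, div_self (ne_of_gt hT), integral_rpow (Or.inl (by norm_num))]
  rw [Real.one_rpow, Real.zero_rpow (by norm_num), smul_eq_mul]
  norm_num
  try ring

/-! ### sums -/

lemma sum_sum_mul {N : ℕ} (m : Fin N → ℝ) (c : ℝ) :
    ∑ i, ∑ j, (m i * m j * c) = (∑ i, m i)^2 * c := by
  rw [sq, Finset.sum_mul_sum, Finset.sum_mul]
  exact Finset.sum_congr rfl fun i _ => by rw [Finset.sum_mul]

section Bounds

variable {d N : ℕ} (G h : ℝ) (m : Fin N → ℝ) (x y : Config d N) (k₁ k₂ : Fin d)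

/-- the coefficient of the singular majorant on the spreading pieces. -/
def C1 : ℝ := (∑ i, m i) * ((Rr x y * (N:ℝ) / T1 x y)^2) + G * (∑ i, m i)^2 * (Rr x y)⁻¹

/-- the constant majorant on the middle piece. -/
def C2 : ℝ := (1/2) * (∑ i, m i) + G * (∑ i, m i)^2 + h

lemma measurable_Xi1 : Measurable (Xi1 x y k₂) := by
  rw [measurable_pi_iff]; intro i
  exact (((continuous_F23.measurable.comp (measurable_id.div_const _)).const_mul
    _).smul_const _).const_add _

lemma measurable_Xi3 : Measurable (Xi3 x y k₂) := by
  rw [measurable_pi_iff]; intro i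
  exact (((continuous_F23.measurable.comp ((measurable_const.sub
    measurable_id).div_const _)).const_mul _).smul_const _).const_add _

lemma measurable_Xi2 : Measurable (Xi2 x y k₁ k₂) := by
  rw [measurable_pi_iff]; intro i
  refine Measurable.add (Measurable.add measurable_const ?_) ?_
  · exact (((measurable_id.sub_const _).div_const _)).smul_const _
  · refine Measurable.smul_const ?_ _
    refine Measurable.const_mul ?_ _
    exact ((measurable_id.sub_const _).div_const _).mul
      (measurable_const.sub ((measurable_id.sub_const _).div_const _))

lemma measurable_V2' : Measurable (V2 x y k₁ k₂) :=
  (continuous_V2 x y k₁ k₂).measurable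

lemma measurable_lag {γ v : ℝ → Config d N} (hγ : Measurable γ) (hv : Measurable v) :
    Measurable (fun t => lagrangian d N G m (γ t) (v t) + h) := by
  unfold lagrangian kineticEnergy
  refine Measurable.add (Measurable.add ?_ ?_) measurable_const
  · refine Measurable.const_mul ?_ _
    exact Finset.measurable_sum _ fun i _ =>
      ((measurable_pi_iff.1 hv i).norm.pow_const 2).const_mul _
  · exact (measurable_potentialEnergy G m).comp hγ

/-- pointwise bound on the first piece. -/
lemma bound1 (hN : 2 ≤ N) (hG : 0 < G) (hm : ∀ i, 0 < m i) {t : ℝ}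
    (ht : t ∈ Set.Ioc 0 (T1 x y)) :
    lagrangian d N G m (Xi1 x y k₂ t) (V1 x y k₂ t) + h
      ≤ C1 G m x y * ((t / T1 x y) ^ (-(2:ℝ)/3)) + h := by
  have hT1 := T1_pos x y hN
  have hRr := Rr_pos x y hN
  set σ : ℝ := t / T1 x y with hσdef
  have hσ : 0 < σ := div_pos ht.1 hT1
  have hσ23 : 0 < σ ^ (-(2:ℝ)/3) := Real.rpow_pos_of_pos hσ _
  have hF' : 0 ≤ F23' σ := by unfold F23'; positivity
  have hkin : kineticEnergy d N m (V1 x y k₂ t)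
      ≤ (∑ i, m i) * ((Rr x y * (N:ℝ) / T1 x y)^2) * σ ^ (-(2:ℝ)/3) := by
    have hterm : ∀ i : Fin N, m i * ‖V1 x y k₂ t i‖^2
        ≤ m i * (((Rr x y * (N:ℝ) / T1 x y)^2) * σ ^ (-(2:ℝ)/3)) := by
      intro i
      refine mul_le_mul_of_nonneg_left ?_ (le_of_lt (hm i))
      have hnv : ‖V1 x y k₂ t i‖ ≤ (Rr x y * (N:ℝ) / T1 x y) * F23' σ := by
        unfold V1
        rw [norm_smul, norm_ev, mul_one, Real.norm_eq_abs, abs_mul, abs_of_nonneg hF']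
        refine mul_le_mul_of_nonneg_right ?_ hF'
        rw [abs_of_nonneg (div_nonneg (mul_nonneg (le_of_lt hRr) (px_nonneg x k₂ i))
          (le_of_lt hT1))]
        refine div_le_div_of_nonneg_right ?_ (le_of_lt hT1)
        exact mul_le_mul_of_nonneg_left (px_le x k₂ i) (le_of_lt hRr)
      calc ‖V1 x y k₂ t i‖^2 ≤ ((Rr x y * (N:ℝ) / T1 x y) * F23' σ)^2 :=
            pow_le_pow_left₀ (norm_nonneg _) hnv 2
        _ = ((Rr x y * (N:ℝ) / T1 x y)^2) * (F23' σ)^2 := by ring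
        _ ≤ ((Rr x y * (N:ℝ) / T1 x y)^2) * σ ^ (-(2:ℝ)/3) :=
            mul_le_mul_of_nonneg_left (sqF23' hσ) (sq_nonneg _)
    have hsum : ∑ i, m i * ‖V1 x y k₂ t i‖^2
        ≤ (∑ i, m i) * ((Rr x y * (N:ℝ) / T1 x y)^2) * σ ^ (-(2:ℝ)/3) := by
      calc ∑ i, m i * ‖V1 x y k₂ t i‖^2
          ≤ ∑ i, m i * (((Rr x y * (N:ℝ) / T1 x y)^2) * σ ^ (-(2:ℝ)/3)) :=
            Finset.sum_le_sum fun i _ => hterm i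
        _ = (∑ i, m i) * ((Rr x y * (N:ℝ) / T1 x y)^2) * σ ^ (-(2:ℝ)/3) := by
            rw [← Finset.sum_mul]; ring
    unfold kineticEnergy
    have h0 : 0 ≤ ∑ i, m i * ‖V1 x y k₂ t i‖^2 :=
      Finset.sum_nonneg fun i _ => mul_nonneg (le_of_lt (hm i)) (sq_nonneg _)
    linarith
  have hpot : potentialEnergy d N G m (Xi1 x y k₂ t)
      ≤ G * (∑ i, m i)^2 * (Rr x y)⁻¹ * σ ^ (-(2:ℝ)/3) := by
    unfold potentialEnergy
    have hterm : ∀ i j : Fin N,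
        (if i < j then G * m i * m j / ‖Xi1 x y k₂ t i - Xi1 x y k₂ t j‖ else 0)
          ≤ m i * m j * (G * ((Rr x y)⁻¹ * σ ^ (-(2:ℝ)/3))) := by
      intro i j
      have hrhs : 0 ≤ m i * m j * (G * ((Rr x y)⁻¹ * σ ^ (-(2:ℝ)/3))) :=
        mul_nonneg (mul_nonneg (le_of_lt (hm i)) (le_of_lt (hm j)))
          (mul_nonneg (le_of_lt hG) (mul_nonneg (inv_nonneg.2 (le_of_lt hRr))
            (le_of_lt hσ23)))
      split_ifs with hij
      · have hsep := sep1 x y k₂ hN (le_of_lt ht.1) (ne_of_lt hij)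
        have hden : 0 < Rr x y * F23 σ := mul_pos hRr (F23_pos hσ)
        calc G * m i * m j / ‖Xi1 x y k₂ t i - Xi1 x y k₂ t j‖
            ≤ G * m i * m j / (Rr x y * F23 σ) :=
              div_le_div_of_nonneg_left (mul_nonneg (mul_nonneg (le_of_lt hG)
                (le_of_lt (hm i))) (le_of_lt (hm j))) hden hsep
          _ = m i * m j * (G * ((Rr x y)⁻¹ * σ ^ (-(2:ℝ)/3))) := by
              rw [div_eq_mul_inv, mul_inv, rpow_neg23 (le_of_lt hσ)]
              ring
      · exact hrhs
    calc ∑ i : Fin N, ∑ j : Fin N,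
          (if i < j then G * m i * m j / ‖Xi1 x y k₂ t i - Xi1 x y k₂ t j‖ else 0)
        ≤ ∑ i : Fin N, ∑ j : Fin N, m i * m j * (G * ((Rr x y)⁻¹ * σ ^ (-(2:ℝ)/3))) :=
          Finset.sum_le_sum fun i _ => Finset.sum_le_sum fun j _ => hterm i j
      _ = (∑ i, m i)^2 * (G * ((Rr x y)⁻¹ * σ ^ (-(2:ℝ)/3))) := sum_sum_mul m _
      _ = G * (∑ i, m i)^2 * (Rr x y)⁻¹ * σ ^ (-(2:ℝ)/3) := by ring
  unfold lagrangian C1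
  nlinarith [hkin, hpot]

/-- pointwise bound on the third piece. -/
lemma bound3 (hN : 2 ≤ N) (hG : 0 < G) (hm : ∀ i, 0 < m i) {t : ℝ}
    (ht : t ∈ Set.Ico (T1 x y + T2 x y) (Ttot x y)) :
    lagrangian d N G m (Xi3 x y k₂ t) (V3 x y k₂ t) + h
      ≤ C1 G m x y * (((Ttot x y - t) / T1 x y) ^ (-(2:ℝ)/3)) + h := by
  have hT1 := T1_pos x y hN
  have hRr := Rr_pos x y hN
  set σ : ℝ := (Ttot x y - t) / T1 x y with hσdef
  have hσ : 0 < σ := div_pos (by linarith [ht.2]) hT1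
  have hσ23 : 0 < σ ^ (-(2:ℝ)/3) := Real.rpow_pos_of_pos hσ _
  have hF' : 0 ≤ F23' σ := by unfold F23'; positivity
  have hkin : kineticEnergy d N m (V3 x y k₂ t)
      ≤ (∑ i, m i) * ((Rr x y * (N:ℝ) / T1 x y)^2) * σ ^ (-(2:ℝ)/3) := by
    have hterm : ∀ i : Fin N, m i * ‖V3 x y k₂ t i‖^2
        ≤ m i * (((Rr x y * (N:ℝ) / T1 x y)^2) * σ ^ (-(2:ℝ)/3)) := by
      intro i
      refine mul_le_mul_of_nonneg_left ?_ (le_of_lt (hm i))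
      have hnv : ‖V3 x y k₂ t i‖ ≤ (Rr x y * (N:ℝ) / T1 x y) * F23' σ := by
        unfold V3
        rw [norm_smul, norm_ev, mul_one, Real.norm_eq_abs, abs_mul, abs_of_nonneg hF']
        refine mul_le_mul_of_nonneg_right ?_ hF'
        rw [abs_div, abs_neg, abs_of_nonneg (mul_nonneg (le_of_lt hRr) (py_nonneg y k₂ i)),
          abs_of_nonneg (le_of_lt hT1)]
        refine div_le_div_of_nonneg_right ?_ (le_of_lt hT1)
        exact mul_le_mul_of_nonneg_left (py_le y k₂ i) (le_of_lt hRr)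
      calc ‖V3 x y k₂ t i‖^2 ≤ ((Rr x y * (N:ℝ) / T1 x y) * F23' σ)^2 :=
            pow_le_pow_left₀ (norm_nonneg _) hnv 2
        _ = ((Rr x y * (N:ℝ) / T1 x y)^2) * (F23' σ)^2 := by ring
        _ ≤ ((Rr x y * (N:ℝ) / T1 x y)^2) * σ ^ (-(2:ℝ)/3) :=
            mul_le_mul_of_nonneg_left (sqF23' hσ) (sq_nonneg _)
    have hsum : ∑ i, m i * ‖V3 x y k₂ t i‖^2
        ≤ (∑ i, m i) * ((Rr x y * (N:ℝ) / T1 x y)^2) * σ ^ (-(2:ℝ)/3) := by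
      calc ∑ i, m i * ‖V3 x y k₂ t i‖^2
          ≤ ∑ i, m i * (((Rr x y * (N:ℝ) / T1 x y)^2) * σ ^ (-(2:ℝ)/3)) :=
            Finset.sum_le_sum fun i _ => hterm i
        _ = (∑ i, m i) * ((Rr x y * (N:ℝ) / T1 x y)^2) * σ ^ (-(2:ℝ)/3) := by
            rw [← Finset.sum_mul]; ring
    unfold kineticEnergy
    have h0 : 0 ≤ ∑ i, m i * ‖V3 x y k₂ t i‖^2 :=
      Finset.sum_nonneg fun i _ => mul_nonneg (le_of_lt (hm i)) (sq_nonneg _)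
    linarith
  have hpot : potentialEnergy d N G m (Xi3 x y k₂ t)
      ≤ G * (∑ i, m i)^2 * (Rr x y)⁻¹ * σ ^ (-(2:ℝ)/3) := by
    unfold potentialEnergy
    have hterm : ∀ i j : Fin N,
        (if i < j then G * m i * m j / ‖Xi3 x y k₂ t i - Xi3 x y k₂ t j‖ else 0)
          ≤ m i * m j * (G * ((Rr x y)⁻¹ * σ ^ (-(2:ℝ)/3))) := by
      intro i j
      have hrhs : 0 ≤ m i * m j * (G * ((Rr x y)⁻¹ * σ ^ (-(2:ℝ)/3))) :=
        mul_nonneg (mul_nonneg (le_of_lt (hm i)) (le_of_lt (hm j)))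
          (mul_nonneg (le_of_lt hG) (mul_nonneg (inv_nonneg.2 (le_of_lt hRr))
            (le_of_lt hσ23)))
      split_ifs with hij
      · have hsep := sep3 x y k₂ hN (le_of_lt ht.2) (ne_of_lt hij)
        have hden : 0 < Rr x y * F23 σ := mul_pos hRr (F23_pos hσ)
        calc G * m i * m j / ‖Xi3 x y k₂ t i - Xi3 x y k₂ t j‖
            ≤ G * m i * m j / (Rr x y * F23 σ) :=
              div_le_div_of_nonneg_left (mul_nonneg (mul_nonneg (le_of_lt hG)
                (le_of_lt (hm i))) (le_of_lt (hm j))) hden hsep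
          _ = m i * m j * (G * ((Rr x y)⁻¹ * σ ^ (-(2:ℝ)/3))) := by
              rw [div_eq_mul_inv, mul_inv, rpow_neg23 (le_of_lt hσ)]
              ring
      · exact hrhs
    calc ∑ i : Fin N, ∑ j : Fin N,
          (if i < j then G * m i * m j / ‖Xi3 x y k₂ t i - Xi3 x y k₂ t j‖ else 0)
        ≤ ∑ i : Fin N, ∑ j : Fin N, m i * m j * (G * ((Rr x y)⁻¹ * σ ^ (-(2:ℝ)/3))) :=
          Finset.sum_le_sum fun i _ => Finset.sum_le_sum fun j _ => hterm i j
      _ = (∑ i, m i)^2 * (G * ((Rr x y)⁻¹ * σ ^ (-(2:ℝ)/3))) := sum_sum_mul m _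
      _ = G * (∑ i, m i)^2 * (Rr x y)⁻¹ * σ ^ (-(2:ℝ)/3) := by ring
  unfold lagrangian C1
  nlinarith [hkin, hpot]

/-- pointwise bound on the middle piece. -/
lemma bound2 (hN : 2 ≤ N) (hk : k₁ ≠ k₂) (hG : 0 < G) (hm : ∀ i, 0 < m i) {t : ℝ}
    (ht : t ∈ Set.Icc (T1 x y) (T1 x y + T2 x y)) :
    lagrangian d N G m (Xi2 x y k₁ k₂ t) (V2 x y k₁ k₂ t) + h ≤ C2 G h m := by
  have hkin : kineticEnergy d N m (V2 x y k₁ k₂ t) ≤ (1/2) * (∑ i, m i) := by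
    unfold kineticEnergy
    have hterm : ∀ i : Fin N, m i * ‖V2 x y k₁ k₂ t i‖^2 ≤ m i := by
      intro i
      have hnv := nv2 x y k₁ k₂ hN hk ht.1 ht.2 i
      have h2 : ‖V2 x y k₁ k₂ t i‖^2 ≤ 1 := by
        nlinarith [norm_nonneg (V2 x y k₁ k₂ t i)]
      calc m i * ‖V2 x y k₁ k₂ t i‖^2 ≤ m i * 1 :=
            mul_le_mul_of_nonneg_left h2 (le_of_lt (hm i))
        _ = m i := mul_one _
    have := Finset.sum_le_sum fun i (_ : i ∈ Finset.univ) => hterm i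
    linarith
  have hpot : potentialEnergy d N G m (Xi2 x y k₁ k₂ t) ≤ G * (∑ i, m i)^2 := by
    unfold potentialEnergy
    have hterm : ∀ i j : Fin N,
        (if i < j then G * m i * m j / ‖Xi2 x y k₁ k₂ t i - Xi2 x y k₁ k₂ t j‖ else 0)
          ≤ m i * m j * G := by
      intro i j
      have hrhs : 0 ≤ m i * m j * G :=
        mul_nonneg (mul_nonneg (le_of_lt (hm i)) (le_of_lt (hm j))) (le_of_lt hG)
      split_ifs with hij
      · have hsep := sep2 x y k₁ k₂ hN hk ht.1 ht.2 (ne_of_lt hij)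
        calc G * m i * m j / ‖Xi2 x y k₁ k₂ t i - Xi2 x y k₁ k₂ t j‖
            ≤ G * m i * m j := div_le_self (mul_nonneg (mul_nonneg (le_of_lt hG)
              (le_of_lt (hm i))) (le_of_lt (hm j))) hsep
          _ = m i * m j * G := by ring
      · exact hrhs
    calc ∑ i : Fin N, ∑ j : Fin N,
          (if i < j then G * m i * m j / ‖Xi2 x y k₁ k₂ t i - Xi2 x y k₁ k₂ t j‖ else 0)
        ≤ ∑ i : Fin N, ∑ j : Fin N, m i * m j * G :=
          Finset.sum_le_sum fun i _ => Finset.sum_le_sum fun j _ => hterm i j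
      _ = (∑ i, m i)^2 * G := sum_sum_mul m G
      _ = G * (∑ i, m i)^2 := by ring
  unfold lagrangian C2
  linarith

end Bounds

end

end NSH
namespace NSH

open MeasureTheory intervalIntegral Set

noncomputable section

section Assemble

variable {d N : ℕ} (G h : ℝ) (m : Fin N → ℝ) (x y : Config d N) (k₁ k₂ : Fin d)

def M1fun (t : ℝ) : ℝ := C1 G m x y * ((t / T1 x y) ^ (-(2:ℝ)/3)) + h

lemma II_M1 (hN : 2 ≤ N) {a b : ℝ} : IntervalIntegrable (M1fun G h m x y) volume a b := by
  unfold M1fun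
  exact ((II_rpow_div _ _ _ _ (by norm_num) (ne_of_gt (T1_pos x y hN))).const_mul
    _).add (intervalIntegrable_const (E := ℝ))

lemma int_M1 (hN : 2 ≤ N) :
    ∫ t in (0:ℝ)..(T1 x y), M1fun G h m x y t
      = C1 G m x y * (3 * T1 x y) + h * T1 x y := by
  have hT1 := T1_pos x y hN
  unfold M1fun
  rw [intervalIntegral.integral_add (((II_rpow_div _ _ _ _ (by norm_num)
      (ne_of_gt hT1)).const_mul _)) (intervalIntegrable_const (E := ℝ)),
    intervalIntegral.integral_const_mul, int_rpow23_div _ hT1,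
    intervalIntegral.integral_const, smul_eq_mul]
  ring

def f1 (t : ℝ) : ℝ := lagrangian d N G m (Xi1 x y k₂ t) (V1 x y k₂ t) + h
def f2 (t : ℝ) : ℝ := lagrangian d N G m (Xi2 x y k₁ k₂ t) (V2 x y k₁ k₂ t) + h
def f3 (t : ℝ) : ℝ := lagrangian d N G m (Xi3 x y k₂ t) (V3 x y k₂ t) + h
def Ftot (t : ℝ) : ℝ := lagrangian d N G m (curveT x y k₁ k₂ t) (velT x y k₁ k₂ t) + h

lemma II_f1 (hN : 2 ≤ N) (hG : 0 < G) (hh : 0 < h) (hm : ∀ i, 0 < m i) : IntervalIntegrable (f1 G h m x y k₂) volume 0 (T1 x y) := by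
  refine intervalIntegrable_of_bound_Ioc (le_of_lt (T1_pos x y hN))
    (measurable_lag G h m (measurable_Xi1 x y k₂) (measurable_V1 x y k₂))
    (II_M1 G h m x y hN) ?_
  intro t ht
  unfold f1
  rw [abs_of_nonneg (lagrangian_add_nonneg G (le_of_lt hG) m (fun i => le_of_lt (hm i))
    h (le_of_lt hh) _ _)]
  exact bound1 G h m x y k₂ hN hG hm ht

lemma int_f1_le (hN : 2 ≤ N) (hG : 0 < G) (hh : 0 < h) (hm : ∀ i, 0 < m i) : ∫ t in (0:ℝ)..(T1 x y), f1 G h m x y k₂ t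
    ≤ C1 G m x y * (3 * T1 x y) + h * T1 x y := by
  refine le_trans (integral_le_of_le_Ioc (le_of_lt (T1_pos x y hN))
    (II_f1 G h m x y k₂ hN hG hh hm) (II_M1 G h m x y hN) ?_)
    (le_of_eq (int_M1 G h m x y hN))
  intro t ht
  exact bound1 G h m x y k₂ hN hG hm ht

lemma II_f2 (hN : 2 ≤ N) (hk : k₁ ≠ k₂) (hG : 0 < G) (hh : 0 < h) (hm : ∀ i, 0 < m i) : IntervalIntegrable (f2 G h m x y k₁ k₂) volume (T1 x y) (T1 x y + T2 x y) := by
  have h12 : T1 x y ≤ T1 x y + T2 x y := by have := T2_pos x y hN; linarith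
  refine intervalIntegrable_of_bound_Ioc h12
    (measurable_lag G h m (measurable_Xi2 x y k₁ k₂) (measurable_V2' x y k₁ k₂))
    (intervalIntegrable_const (E := ℝ) (c := C2 G h m)) ?_
  intro t ht
  unfold f2
  rw [abs_of_nonneg (lagrangian_add_nonneg G (le_of_lt hG) m (fun i => le_of_lt (hm i))
    h (le_of_lt hh) _ _)]
  exact bound2 G h m x y k₁ k₂ hN hk hG hm ⟨le_of_lt ht.1, ht.2⟩

lemma int_f2_le (hN : 2 ≤ N) (hk : k₁ ≠ k₂) (hG : 0 < G) (hh : 0 < h) (hm : ∀ i, 0 < m i) : ∫ t in (T1 x y)..(T1 x y + T2 x y), f2 G h m x y k₁ k₂ t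
    ≤ C2 G h m * T2 x y := by
  have h12 : T1 x y ≤ T1 x y + T2 x y := by have := T2_pos x y hN; linarith
  have hle := integral_le_of_le_Ioc h12 (II_f2 G h m x y k₁ k₂ hN hk hG hh hm)
    (intervalIntegrable_const (E := ℝ) (c := C2 G h m))
    (fun t ht => bound2 G h m x y k₁ k₂ hN hk hG hm ⟨le_of_lt ht.1, ht.2⟩)
  rw [intervalIntegral.integral_const, smul_eq_mul] at hle
  calc ∫ t in (T1 x y)..(T1 x y + T2 x y), f2 G h m x y k₁ k₂ t
      ≤ (T1 x y + T2 x y - T1 x y) * C2 G h m := hle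
    _ = C2 G h m * T2 x y := by ring

lemma M3_eq (t : ℝ) : M1fun G h m x y (Ttot x y - t)
    = C1 G m x y * (((Ttot x y - t) / T1 x y) ^ (-(2:ℝ)/3)) + h := rfl

lemma II_M3 (hN' : 2 ≤ N) :
    IntervalIntegrable (fun t => M1fun G h m x y (Ttot x y - t)) volume
      (T1 x y + T2 x y) (Ttot x y) := by
  have hII := (II_M1 G h m x y (a := T1 x y) (b := 0) hN').comp_sub_left (Ttot x y)
  have e1 : Ttot x y - T1 x y = T1 x y + T2 x y := by unfold Ttot; ring
  have e2 : Ttot x y - 0 = Ttot x y := by ring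
  rw [e1, e2] at hII
  exact hII

lemma int_M3 (hN' : 2 ≤ N) :
    ∫ t in (T1 x y + T2 x y)..(Ttot x y), M1fun G h m x y (Ttot x y - t)
      = C1 G m x y * (3 * T1 x y) + h * T1 x y := by
  rw [intervalIntegral.integral_comp_sub_left (M1fun G h m x y) (Ttot x y)]
  rw [show Ttot x y - Ttot x y = 0 from by ring,
    show Ttot x y - (T1 x y + T2 x y) = T1 x y from by unfold Ttot; ring]
  exact int_M1 G h m x y hN'

lemma II_f3 (hN : 2 ≤ N) (hG : 0 < G) (hh : 0 < h) (hm : ∀ i, 0 < m i) : IntervalIntegrable (f3 G h m x y k₂) volume (T1 x y + T2 x y) (Ttot x y) := by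
  have h23 : T1 x y + T2 x y ≤ Ttot x y := by
    have := T1_pos x y hN; unfold Ttot; linarith
  refine intervalIntegrable_of_bound_Ioo h23
    (measurable_lag G h m (measurable_Xi3 x y k₂) (measurable_V3 x y k₂))
    (II_M3 G h m x y hN) ?_
  intro t ht
  unfold f3
  rw [abs_of_nonneg (lagrangian_add_nonneg G (le_of_lt hG) m (fun i => le_of_lt (hm i))
    h (le_of_lt hh) _ _)]
  exact bound3 G h m x y k₂ hN hG hm ⟨le_of_lt ht.1, ht.2⟩

lemma int_f3_le (hN : 2 ≤ N) (hG : 0 < G) (hh : 0 < h) (hm : ∀ i, 0 < m i) : ∫ t in (T1 x y + T2 x y)..(Ttot x y), f3 G h m x y k₂ t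
    ≤ C1 G m x y * (3 * T1 x y) + h * T1 x y := by
  have h23 : T1 x y + T2 x y ≤ Ttot x y := by
    have := T1_pos x y hN; unfold Ttot; linarith
  refine le_trans (integral_le_of_le_Ioo h23 (II_f3 G h m x y k₂ hN hG hh hm)
    (II_M3 G h m x y hN) ?_) (le_of_eq (int_M3 G h m x y hN))
  intro t ht
  exact bound3 G h m x y k₂ hN hG hm ⟨le_of_lt ht.1, ht.2⟩

lemma II_Ftot1 (hN : 2 ≤ N) (hG : 0 < G) (hh : 0 < h) (hm : ∀ i, 0 < m i) : IntervalIntegrable (Ftot G h m x y k₁ k₂) volume 0 (T1 x y) := by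
  have h1 : (0:ℝ) ≤ T1 x y := le_of_lt (T1_pos x y hN)
  rw [intervalIntegrable_iff_integrableOn_Ioc_of_le h1]
  have hII := II_f1 G h m x y k₂ hN hG hh hm
  rw [intervalIntegrable_iff_integrableOn_Ioc_of_le h1] at hII
  refine hII.congr_fun ?_ measurableSet_Ioc
  intro t ht
  unfold Ftot f1
  rw [curveT_eq1 x y k₁ k₂ ht.2, velT_eq1 x y k₁ k₂ ht.2]

lemma II_Ftot2 (hN : 2 ≤ N) (hk : k₁ ≠ k₂) (hG : 0 < G) (hh : 0 < h) (hm : ∀ i, 0 < m i) : IntervalIntegrable (Ftot G h m x y k₁ k₂) volume (T1 x y)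
    (T1 x y + T2 x y) := by
  have h1 : T1 x y ≤ T1 x y + T2 x y := by have := T2_pos x y hN; linarith
  rw [intervalIntegrable_iff_integrableOn_Ioc_of_le h1]
  have hII := II_f2 G h m x y k₁ k₂ hN hk hG hh hm
  rw [intervalIntegrable_iff_integrableOn_Ioc_of_le h1] at hII
  refine hII.congr_fun ?_ measurableSet_Ioc
  intro t ht
  unfold Ftot f2
  rw [curveT_eq2 x y k₁ k₂ ht.1 ht.2, velT_eq2 x y k₁ k₂ ht.1 ht.2]

lemma II_Ftot3 (hN : 2 ≤ N) (hG : 0 < G) (hh : 0 < h) (hm : ∀ i, 0 < m i) : IntervalIntegrable (Ftot G h m x y k₁ k₂) volume (T1 x y + T2 x y)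
    (Ttot x y) := by
  have h1 : T1 x y + T2 x y ≤ Ttot x y := by
    have := T1_pos x y hN; unfold Ttot; linarith
  rw [intervalIntegrable_iff_integrableOn_Ioc_of_le h1]
  have hII := II_f3 G h m x y k₂ hN hG hh hm
  rw [intervalIntegrable_iff_integrableOn_Ioc_of_le h1] at hII
  refine hII.congr_fun ?_ measurableSet_Ioc
  intro t ht
  unfold Ftot f3
  rw [curveT_eq3 x y k₁ k₂ ht.1 hN, velT_eq3 x y k₁ k₂ ht.1 hN]

lemma II_Ftot (hN : 2 ≤ N) (hk : k₁ ≠ k₂) (hG : 0 < G) (hh : 0 < h) (hm : ∀ i, 0 < m i) : IntervalIntegrable (Ftot G h m x y k₁ k₂) volume 0 (Ttot x y) :=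
  ((II_Ftot1 G h m x y k₁ k₂ hN hG hh hm).trans
    (II_Ftot2 G h m x y k₁ k₂ hN hk hG hh hm)).trans
      (II_Ftot3 G h m x y k₁ k₂ hN hG hh hm)

lemma int_Ftot_le (hN : 2 ≤ N) (hk : k₁ ≠ k₂) (hG : 0 < G) (hh : 0 < h) (hm : ∀ i, 0 < m i) : ∫ t in (0:ℝ)..(Ttot x y), Ftot G h m x y k₁ k₂ t
    ≤ 2 * (C1 G m x y * (3 * T1 x y) + h * T1 x y) + C2 G h m * T2 x y := by
  have hT1 := T1_pos x y hN
  have hT2 := T2_pos x y hN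
  rw [← intervalIntegral.integral_add_adjacent_intervals
      (((II_Ftot1 G h m x y k₁ k₂ hN hG hh hm).trans
        (II_Ftot2 G h m x y k₁ k₂ hN hk hG hh hm)))
      (II_Ftot3 G h m x y k₁ k₂ hN hG hh hm),
    ← intervalIntegral.integral_add_adjacent_intervals
      (II_Ftot1 G h m x y k₁ k₂ hN hG hh hm)
      (II_Ftot2 G h m x y k₁ k₂ hN hk hG hh hm)]
  have e1 : ∫ t in (0:ℝ)..(T1 x y), Ftot G h m x y k₁ k₂ t
      = ∫ t in (0:ℝ)..(T1 x y), f1 G h m x y k₂ t := by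
    refine intervalIntegral.integral_congr ?_
    intro t ht
    rw [Set.uIcc_of_le (le_of_lt hT1)] at ht
    unfold Ftot f1
    rw [curveT_eq1 x y k₁ k₂ ht.2, velT_eq1 x y k₁ k₂ ht.2]
  have e2 : ∫ t in (T1 x y)..(T1 x y + T2 x y), Ftot G h m x y k₁ k₂ t
      = ∫ t in (T1 x y)..(T1 x y + T2 x y), f2 G h m x y k₁ k₂ t := by
    refine intervalIntegral.integral_congr_ae ?_
    filter_upwards with t ht
    rw [Set.uIoc_of_le (by linarith : T1 x y ≤ T1 x y + T2 x y)] at ht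
    unfold Ftot f2
    rw [curveT_eq2 x y k₁ k₂ ht.1 ht.2, velT_eq2 x y k₁ k₂ ht.1 ht.2]
  have e3 : ∫ t in (T1 x y + T2 x y)..(Ttot x y), Ftot G h m x y k₁ k₂ t
      = ∫ t in (T1 x y + T2 x y)..(Ttot x y), f3 G h m x y k₂ t := by
    refine intervalIntegral.integral_congr_ae ?_
    filter_upwards with t ht
    rw [Set.uIoc_of_le (by unfold Ttot; linarith : T1 x y + T2 x y ≤ Ttot x y)] at ht
    unfold Ftot f3
    rw [curveT_eq3 x y k₁ k₂ ht.1 hN, velT_eq3 x y k₁ k₂ ht.1 hN]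
  rw [e1, e2, e3]
  have := int_f1_le G h m x y k₂ hN hG hh hm
  have := int_f2_le G h m x y k₁ k₂ hN hk hG hh hm
  have := int_f3_le G h m x y k₂ hN hG hh hm
  linarith

end Assemble

/-! ### the uniform constant -/

def Lam (N : ℕ) (G h : ℝ) (m : Fin N → ℝ) : ℝ :=
  (6*((∑ i, m i)*(N:ℝ)^2 + G*(∑ i, m i)^2) + 2*h)*(100*(N:ℝ))
    + ((1/2)*(∑ i, m i) + G*(∑ i, m i)^2 + h)*(2+600*(N:ℝ)^2)

lemma Sm_pos {N : ℕ} (hN : 2 ≤ N) {m : Fin N → ℝ} (hm : ∀ i, 0 < m i) :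
    0 < ∑ i, m i := by
  have : Nonempty (Fin N) := ⟨⟨0, by omega⟩⟩
  exact Finset.sum_pos (fun i _ => hm i) Finset.univ_nonempty

lemma Lam_pos {N : ℕ} (hN : 2 ≤ N) {G h : ℝ} (hG : 0 < G) (hh : 0 < h)
    {m : Fin N → ℝ} (hm : ∀ i, 0 < m i) : 0 < Lam N G h m := by
  have hSm := Sm_pos hN hm
  have hn : (2:ℝ) ≤ (N:ℝ) := by exact_mod_cast hN
  unfold Lam
  have hA : 0 < 6*((∑ i, m i)*(N:ℝ)^2 + G*(∑ i, m i)^2) + 2*h := by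
    nlinarith [mul_pos hSm (show (0:ℝ) < (N:ℝ)^2 by nlinarith),
      mul_pos hG (mul_pos hSm hSm)]
  have hB : 0 < (1/2)*(∑ i, m i) + G*(∑ i, m i)^2 + h := by
    nlinarith [mul_pos hG (mul_pos hSm hSm)]
  nlinarith [mul_pos hA (show (0:ℝ) < 100*(N:ℝ) by nlinarith),
    mul_pos hB (show (0:ℝ) < 2+600*(N:ℝ)^2 by nlinarith)]

lemma total_le_Lam {d N : ℕ} (G h : ℝ) (m : Fin N → ℝ) (x y : Config d N)
    (hN : 2 ≤ N) (hG : 0 < G) (hh : 0 < h) (hm : ∀ i, 0 < m i) :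
    2 * (C1 G m x y * (3 * T1 x y) + h * T1 x y) + C2 G h m * T2 x y
      ≤ Lam N G h m * Pp x y := by
  have hP := Pp_ge_one x y
  have hRr := Rr_ge x y hN
  have hRr0 := Rr_pos x y hN
  have hSm := Sm_pos hN hm
  have hn : (2:ℝ) ≤ (N:ℝ) := by exact_mod_cast hN
  have hC1 : C1 G m x y ≤ (∑ i, m i)*(N:ℝ)^2 + G*(∑ i, m i)^2 := by
    unfold C1
    have e1 : Rr x y * (N:ℝ) / T1 x y = (N:ℝ) := by
      show Rr x y * (N:ℝ) / Rr x y = (N:ℝ)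
      field_simp
    rw [e1]
    have e2 : (Rr x y)⁻¹ ≤ 1 := by
      exact inv_le_one_of_one_le₀ (by linarith)
    have e3 : G*(∑ i, m i)^2*(Rr x y)⁻¹ ≤ G*(∑ i, m i)^2 := by
      nlinarith [mul_pos hG (mul_pos hSm hSm)]
    linarith
  have hC10 : 0 ≤ C1 G m x y := by
    unfold C1
    have h0 : 0 ≤ (Rr x y)⁻¹ := inv_nonneg.2 (le_of_lt hRr0)
    have h1 : 0 ≤ (∑ i, m i) * (Rr x y * (N:ℝ) / T1 x y)^2 :=
      mul_nonneg (le_of_lt hSm) (sq_nonneg _)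
    have h2 : 0 ≤ G * (∑ i, m i)^2 * (Rr x y)⁻¹ :=
      mul_nonneg (mul_nonneg (le_of_lt hG) (sq_nonneg _)) h0
    linarith
  have hC20 : 0 ≤ C2 G h m := by
    unfold C2
    nlinarith [sq_nonneg (∑ i, m i), mul_pos hG (mul_pos hSm hSm)]
  have hT1eq : T1 x y = 100*(N:ℝ)*Pp x y := rfl
  have hT2eq : T2 x y = (2+600*(N:ℝ)^2)*Pp x y := by
    show 2*Pp x y + 6*(N:ℝ)*Rr x y = (2+600*(N:ℝ)^2)*Pp x y
    show 2*Pp x y + 6*(N:ℝ)*(100*(N:ℝ)*Pp x y) = (2+600*(N:ℝ)^2)*Pp x y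
    ring
  unfold Lam
  rw [hT1eq, hT2eq]
  have hkey : 2 * (C1 G m x y * (3 * (100*(N:ℝ)*Pp x y)) + h * (100*(N:ℝ)*Pp x y))
      = (6*C1 G m x y + 2*h)*(100*(N:ℝ))*Pp x y := by ring
  rw [hkey]
  have h1 : (6*C1 G m x y + 2*h)*(100*(N:ℝ))*Pp x y
      ≤ (6*((∑ i, m i)*(N:ℝ)^2 + G*(∑ i, m i)^2) + 2*h)*(100*(N:ℝ))*Pp x y := by
    have hfac : (0:ℝ) ≤ (100*(N:ℝ))*Pp x y := by nlinarith
    nlinarith [mul_le_mul_of_nonneg_right (by linarith : 6*C1 G m x y + 2*h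
      ≤ 6*((∑ i, m i)*(N:ℝ)^2 + G*(∑ i, m i)^2) + 2*h) hfac]
  have h2 : C2 G h m * ((2+600*(N:ℝ)^2)*Pp x y)
      ≤ ((1/2)*(∑ i, m i) + G*(∑ i, m i)^2 + h)*(2+600*(N:ℝ)^2)*Pp x y := by
    have : C2 G h m = (1/2)*(∑ i, m i) + G*(∑ i, m i)^2 + h := rfl
    rw [this]; ring_nf; exact le_refl _
  nlinarith [h1, h2]

end

end NSH
namespace NSH

open MeasureTheory intervalIntegral Set

noncomputable section

lemma phiFree_le {d N : ℕ} (hd : 2 ≤ d) (hN : 2 ≤ N) {G h : ℝ} (hG : 0 < G) (hh : 0 < h)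
    {m : Fin N → ℝ} (hm : ∀ i, 0 < m i) (x y : Config d N) :
    phiFree d N G m h x y ≤ Lam N G h m * Pp x y := by
  set k₁ : Fin d := ⟨0, by omega⟩ with hk1def
  set k₂ : Fin d := ⟨1, by omega⟩ with hk2def
  have hk : k₁ ≠ k₂ := by
    rw [hk1def, hk2def]
    exact Fin.ne_of_val_ne (by norm_num)
  have hTnonneg : ∀ x' y' : Config d N, ∀ τ : ℝ, 0 < τ →
      0 ≤ phiTimed d N G m h x' y' τ := by
    intro x' y' τ hτ
    refine Real.sInf_nonneg fun c hc => ?_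
    obtain ⟨γ', g', hAC, h0, h1, hInt, hceq⟩ := hc
    rw [hceq]
    exact intervalIntegral.integral_nonneg (le_of_lt hτ)
      (fun u _ => lagrangian_add_nonneg G (le_of_lt hG) m (fun i => le_of_lt (hm i))
        h (le_of_lt hh) _ _)
  have hfree_bdd : BddBelow {c : ℝ | ∃ τ : ℝ, 0 < τ ∧ c = phiTimed d N G m h x y τ} := by
    refine ⟨0, fun c hc => ?_⟩
    obtain ⟨τ, hτ, rfl⟩ := hc
    exact hTnonneg x y τ hτ
  have step1 : phiFree d N G m h x y ≤ phiTimed d N G m h x y (Ttot x y) :=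
    csInf_le hfree_bdd ⟨Ttot x y, Ttot_pos x y hN, rfl⟩
  have hTbdd : BddBelow {c : ℝ | ∃ γ g : ℝ → Config d N,
      ACOn d N γ g 0 (Ttot x y) ∧ γ 0 = x ∧ γ (Ttot x y) = y ∧
      IntervalIntegrable (fun t => lagrangian d N G m (γ t) (g t) + h) volume 0 (Ttot x y) ∧
      c = ∫ t in (0:ℝ)..(Ttot x y), (lagrangian d N G m (γ t) (g t) + h) } := by
    refine ⟨0, fun c hc => ?_⟩
    obtain ⟨γ', g', hAC, h0, h1, hInt, hceq⟩ := hc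
    rw [hceq]
    exact intervalIntegral.integral_nonneg (le_of_lt (Ttot_pos x y hN))
      (fun u _ => lagrangian_add_nonneg G (le_of_lt hG) m (fun i => le_of_lt (hm i))
        h (le_of_lt hh) _ _)
  have hmem : (∫ t in (0:ℝ)..(Ttot x y),
      (lagrangian d N G m (curveT x y k₁ k₂ t) (velT x y k₁ k₂ t) + h)) ∈
      {c : ℝ | ∃ γ g : ℝ → Config d N,
      ACOn d N γ g 0 (Ttot x y) ∧ γ 0 = x ∧ γ (Ttot x y) = y ∧
      IntervalIntegrable (fun t => lagrangian d N G m (γ t) (g t) + h) volume 0 (Ttot x y) ∧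
      c = ∫ t in (0:ℝ)..(Ttot x y), (lagrangian d N G m (γ t) (g t) + h) } :=
    ⟨curveT x y k₁ k₂, velT x y k₁ k₂, acOn_curveT x y k₁ k₂ hN,
      curveT_zero x y k₁ k₂ hN, curveT_end x y k₁ k₂ hN,
      II_Ftot G h m x y k₁ k₂ hN hk hG hh hm, rfl⟩
  have step2 : phiTimed d N G m h x y (Ttot x y)
      ≤ ∫ t in (0:ℝ)..(Ttot x y),
          (lagrangian d N G m (curveT x y k₁ k₂ t) (velT x y k₁ k₂ t) + h) :=
    csInf_le hTbdd hmem
  refine step1.trans (step2.trans ?_)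
  exact le_trans (int_Ftot_le G h m x y k₁ k₂ hN hk hG hh hm)
    (total_le_Lam G h m x y hN hG hh hm)

lemma kinetic_lower {d N : ℕ} (m : Fin N → ℝ) (hm : ∀ i, 0 < m i) (μ : Fin N → ℝ)
    (v : Config d N) :
    (∑ i, μ i * ‖v i‖) - (∑ i, (μ i)^2/(2*m i)) ≤ kineticEnergy d N m v := by
  unfold kineticEnergy
  rw [Finset.mul_sum, sub_le_iff_le_add, ← Finset.sum_add_distrib]
  refine Finset.sum_le_sum fun i _ => ?_
  have hM := hm i
  have key : 1/2*(m i*‖v i‖^2) + (μ i)^2/(2*m i) - μ i*‖v i‖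
      = (m i*‖v i‖ - μ i)^2/(2*m i) := by field_simp; ring
  have h0 : 0 ≤ (m i*‖v i‖ - μ i)^2/(2*m i) := div_nonneg (sq_nonneg _) (by linarith)
  have h1 : 0 ≤ 1/2*(m i*‖v i‖^2) + (μ i)^2/(2*m i) - μ i*‖v i‖ := by rw [key]; exact h0
  linarith

lemma action_lower {d N : ℕ} (G h : ℝ) (hG : 0 < G) (hh : 0 < h) (m : Fin N → ℝ)
    (hm : ∀ i, 0 < m i) (γ g : ℝ → Config d N) (t : ℝ) (ht : 0 < t)
    (hAC : ACOn d N γ g 0 t)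
    (hInt : IntervalIntegrable (fun s => lagrangian d N G m (γ s) (g s) + h) volume 0 t)
    (μ : Fin N → ℝ) (hμ : ∀ i, 0 ≤ μ i) :
    (∑ i, μ i * ‖γ t i - γ 0 i‖) - (∑ i, (μ i)^2/(2*m i)) * t
      ≤ ∫ s in (0:ℝ)..t, (lagrangian d N G m (γ s) (g s) + h) := by
  have hgi : ∀ i, IntervalIntegrable (fun s => g s i) volume 0 t := fun i =>
    intervalIntegrable_apply hAC.integrable i
  have hfun : (fun s => ∑ i, μ i * ‖g s i‖) = (∑ i : Fin N, fun s => μ i * ‖g s i‖) := by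
    funext s; rw [Finset.sum_apply]
  have hsumII : IntervalIntegrable (fun s => ∑ i, μ i * ‖g s i‖) volume 0 t := by
    rw [hfun]
    exact IntervalIntegrable.sum _ fun i _ => ((hgi i).norm.const_mul _)
  set c : ℝ := ∑ i, (μ i)^2/(2*m i) with hcdef
  have hφII : IntervalIntegrable (fun s => (∑ i, μ i * ‖g s i‖) - c) volume 0 t :=
    hsumII.sub intervalIntegrable_const
  have hmono : ∫ s in (0:ℝ)..t, ((∑ i, μ i * ‖g s i‖) - c)
      ≤ ∫ s in (0:ℝ)..t, (lagrangian d N G m (γ s) (g s) + h) := by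
    refine intervalIntegral.integral_mono_on (le_of_lt ht) hφII hInt fun s _ => ?_
    have hk := kinetic_lower m hm μ (g s)
    have hU := potentialEnergy_nonneg G (le_of_lt hG) m (fun i => le_of_lt (hm i)) (γ s)
    unfold lagrangian
    rw [hcdef]
    linarith
  have hsplit : ∫ s in (0:ℝ)..t, ((∑ i, μ i * ‖g s i‖) - c)
      = (∑ i, μ i * ∫ s in (0:ℝ)..t, ‖g s i‖) - c * t := by
    rw [intervalIntegral.integral_sub hsumII intervalIntegrable_const,
      intervalIntegral.integral_const, smul_eq_mul]
    have e1 : ∫ s in (0:ℝ)..t, (∑ i, μ i * ‖g s i‖)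
        = ∑ i, μ i * ∫ s in (0:ℝ)..t, ‖g s i‖ := by
      rw [intervalIntegral.integral_finset_sum
        (fun i _ => ((hgi i).norm.const_mul _))]
      exact Finset.sum_congr rfl fun i _ => by
        rw [intervalIntegral.integral_const_mul]
    rw [e1]
    ring
  have hdisp : ∀ i, ‖γ t i - γ 0 i‖ ≤ ∫ s in (0:ℝ)..t, ‖g s i‖ := by
    intro i
    have heq := hAC.eq t ⟨le_of_lt ht, le_refl t⟩
    have hcomp : γ t i - γ 0 i = ∫ s in (0:ℝ)..t, g s i := by
      rw [heq, Pi.add_apply, add_sub_cancel_left, intervalIntegral_apply hAC.integrable i]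
    rw [hcomp]
    exact intervalIntegral.norm_integral_le_integral_norm (le_of_lt ht)
  have hsum_le : ∑ i, μ i * ‖γ t i - γ 0 i‖ ≤ ∑ i, μ i * ∫ s in (0:ℝ)..t, ‖g s i‖ :=
    Finset.sum_le_sum fun i _ => mul_le_mul_of_nonneg_left (hdisp i) (hμ i)
  linarith [hmono, hsplit ▸ hmono]

end

end NSH
/-- for `d ≥ 2` and `h > 0`, no `h`-free time minimizer is superhyperbolic:
`limsup_{t→∞} R(t)/t < ∞`, i.e. eventually `r_ij(t) ≤ C t` for all pairs. -/
theorem free_time_minimizer_not_superhyperbolic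
    (d N : ℕ) (hd : 2 ≤ d) (hN : 2 ≤ N) (G : ℝ) (hG : 0 < G)
    (m : Fin N → ℝ) (hm : ∀ i, 0 < m i) (h : ℝ) (hh : 0 < h)
    (γ g : ℝ → Config d N) (hγ : IsFTM d N G m h γ g) :
    ∃ C t₀ : ℝ, ∀ t ≥ t₀, ∀ i j : Fin N, ‖γ t i - γ t j‖ ≤ C * t := by
  classical
  set Λ : ℝ := NSH.Lam N G h m with hΛdef
  have hΛ : 0 < Λ := NSH.Lam_pos hN hG hh hm
  set c : ℝ := ∑ i, (Λ+1)^2/(2*m i) with hcdef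
  have hc0 : 0 ≤ c := Finset.sum_nonneg fun i _ =>
    div_nonneg (sq_nonneg _) (by linarith [hm i])
  set Sx : ℝ := ∑ i, ‖γ 0 i‖ with hSxdef
  have hSx0 : 0 ≤ Sx := Finset.sum_nonneg fun i _ => norm_nonneg _
  set α₀ : ℝ := Λ * (1 + 2*Sx) with hα₀def
  have hα₀0 : 0 ≤ α₀ := by
    rw [hα₀def]; nlinarith
  refine ⟨2*c + 1, max 1 (2*α₀ + 2*Sx + 1), ?_⟩
  intro t ht i j
  have ht1 : (1:ℝ) ≤ t := le_trans (le_max_left _ _) ht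
  have ht0 : 0 < t := by linarith
  obtain ⟨hAC, hInt, heq⟩ := hγ 0 le_rfl t ht0
  rw [zero_add] at hAC hInt heq
  -- upper bound on the action via the free-time minimization property
  have hup : (∫ s in (0:ℝ)..t, (lagrangian d N G m (γ s) (g s) + h))
      ≤ Λ * (1 + Sx + ∑ i, ‖γ t i‖) := by
    rw [heq]
    have hphile := NSH.phiFree_le hd hN hG hh hm (γ 0) (γ t)
    have hPp : NSH.Pp (γ 0) (γ t) = 1 + Sx + ∑ i, ‖γ t i‖ := by
      rw [hSxdef]
      show 1 + (∑ i, ‖γ 0 i‖ + ∑ i, ‖γ t i‖) = 1 + (∑ i, ‖γ 0 i‖) + ∑ i, ‖γ t i‖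
      ring
    rw [hPp] at hphile
    exact hphile
  -- lower bound on the action via AM-GM
  set μ : Fin N → ℝ := fun _ => Λ + 1 with hμdef
  have hlow := NSH.action_lower G h hG hh m hm γ g t ht0 hAC hInt μ
    (fun i => by rw [hμdef]; positivity)
  set W : ℝ := ∑ i, ‖γ t i - γ 0 i‖ with hWdef
  have hμsum : ∑ i, μ i * ‖γ t i - γ 0 i‖ = (Λ+1) * W := by
    rw [hWdef, Finset.mul_sum]
  have hμc : (∑ i, (μ i)^2/(2*m i)) = c := by
    rw [hcdef]
  rw [hμsum, hμc] at hlow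
  have hWup : ∑ i, ‖γ t i‖ ≤ W + Sx := by
    rw [hWdef, hSxdef, ← Finset.sum_add_distrib]
    refine Finset.sum_le_sum fun k _ => ?_
    calc ‖γ t k‖ = ‖(γ t k - γ 0 k) + γ 0 k‖ := by rw [sub_add_cancel]
      _ ≤ ‖γ t k - γ 0 k‖ + ‖γ 0 k‖ := norm_add_le _ _
  have hW0 : 0 ≤ W := Finset.sum_nonneg fun i _ => norm_nonneg _
  -- combine
  have hW : W ≤ α₀ + c*t := by
    have h1 : Λ * (1 + Sx + ∑ i, ‖γ t i‖) ≤ Λ * (1 + Sx + (W + Sx)) :=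
      mul_le_mul_of_nonneg_left (by linarith) (le_of_lt hΛ)
    have h2 : Λ * (1 + Sx + (W + Sx)) = Λ*W + α₀ := by rw [hα₀def]; ring
    have h3 : (Λ+1)*W = Λ*W + W := by ring
    linarith
  -- pass to mutual distances
  have hsingle : ∀ k : Fin N, ‖γ t k - γ 0 k‖ ≤ W := by
    intro k
    rw [hWdef]
    exact Finset.single_le_sum (f := fun k => ‖γ t k - γ 0 k‖)
      (fun _ _ => norm_nonneg _) (Finset.mem_univ k)
  have hsingle0 : ∀ k : Fin N, ‖γ 0 k‖ ≤ Sx := by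
    intro k
    rw [hSxdef]
    exact Finset.single_le_sum (f := fun k => ‖γ 0 k‖)
      (fun _ _ => norm_nonneg _) (Finset.mem_univ k)
  have hij : ‖γ t i - γ t j‖ ≤ 2*W + 2*Sx := by
    have e : γ t i - γ t j = (γ t i - γ 0 i) + (γ 0 i - γ 0 j) + (γ 0 j - γ t j) := by
      abel
    calc ‖γ t i - γ t j‖
        ≤ ‖γ t i - γ 0 i‖ + ‖γ 0 i - γ 0 j‖ + ‖γ 0 j - γ t j‖ := by
          rw [e]
          exact le_trans (norm_add_le _ _)
            (add_le_add_left (norm_add_le _ _) _)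
      _ ≤ W + (‖γ 0 i‖ + ‖γ 0 j‖) + W := by
          have h1 := hsingle i
          have h2 := hsingle j
          have h3 := norm_sub_le (γ 0 i) (γ 0 j)
          have h4 : ‖γ 0 j - γ t j‖ = ‖γ t j - γ 0 j‖ := norm_sub_rev _ _
          linarith
      _ ≤ 2*W + 2*Sx := by
          have := hsingle0 i
          have := hsingle0 j
          linarith
  have hα : 2*α₀ + 2*Sx + 1 ≤ t := le_trans (le_max_right _ _) ht
  have hct : 0 ≤ c*t := mul_nonneg hc0 (le_of_lt ht0)
  calc ‖γ t i - γ t j‖ ≤ 2*W + 2*Sx := hij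
    _ ≤ 2*(α₀ + c*t) + 2*Sx := by linarith
    _ ≤ (2*c + 1)*t := by nlinarith
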